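/- arXiv:2404.03318 — 4 statements merged into one kernel-verified Lean document; each statement's English description precedes it below -/
import Mathlib

section
/- Let g = sl(2,R) with basis {X, Y, Z} satisfying [X,Y] = Z, [Z,X] = -Y, [Z,Y] = X. For every t > 0, k_t = span_C{X - t·i·Y} ⊂ g_C satisfies k_t ∩ conj(k_t) = {0} and k_t ⊕ conj(k_t) is not a subalgebra of g_C; moreover [Z, X - t·i·Y] ∈ k_t if and only if t = 1. -/
open Complex

/-- The bracket of (the complexification of) `sl(2,ℝ)` with respect to the basis
`X, Y, Z` satisfying `[X,Y] = Z`, `[Z,X] = -Y`, `[Z,Y] = X`, extended bilinearly: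
a vector `a : Fin 3 → ℂ` stands for `a 0 • X + a 1 • Y + a 2 • Z`. -/
noncomputable def sl2br (a b : Fin 3 → ℂ) : Fin 3 → ℂ :=
  ![a 2 * b 1 - a 1 * b 2, a 0 * b 2 - a 2 * b 0, a 0 * b 1 - a 1 * b 0]

noncomputable def Xv : Fin 3 → ℂ := ![1, 0, 0]
noncomputable def Yv : Fin 3 → ℂ := ![0, 1, 0]
noncomputable def Zv : Fin 3 → ℂ := ![0, 0, 1]

/-- The conjugation of the complexification fixing the real form `sl(2,ℝ)`. -/
noncomputable def conjv (v : Fin 3 → ℂ) : Fin 3 → ℂ := fun i => star (v i)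

/-- `k_t = span_ℂ{X - t·i·Y}`. -/
noncomputable def kt (t : ℝ) : Submodule ℂ (Fin 3 → ℂ) :=
  Submodule.span ℂ ({Xv - ((t : ℂ) * I) • Yv} : Set (Fin 3 → ℂ))

/-- `conj(k_t)`. -/
noncomputable def ktbar (t : ℝ) : Submodule ℂ (Fin 3 → ℂ) :=
  Submodule.span ℂ (conjv '' (kt t : Set (Fin 3 → ℂ)))

lemma conjv_smul (a : ℂ) (u : Fin 3 → ℂ) : conjv (a • u) = (star a) • conjv u := by
  funext i
  simp [conjv, mul_comm]

lemma vt_apply (t : ℝ) :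
    (Xv - ((t : ℂ) * I) • Yv) = ![1, -((t:ℂ) * I), 0] := by
  funext i
  fin_cases i <;> simp [Xv, Yv]

lemma conjv_vt (t : ℝ) :
    conjv (Xv - ((t : ℂ) * I) • Yv) = ![1, (t:ℂ) * I, 0] := by
  rw [vt_apply]
  funext i
  fin_cases i <;> simp [conjv]

lemma ktbar_eq (t : ℝ) :
    ktbar t = Submodule.span ℂ ({![1, (t:ℂ) * I, 0]} : Set (Fin 3 → ℂ)) := by
  unfold ktbar
  apply le_antisymm
  · rw [Submodule.span_le]
    rintro x ⟨y, hy, rfl⟩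
    rw [kt, SetLike.mem_coe, Submodule.mem_span_singleton] at hy
    obtain ⟨c, rfl⟩ := hy
    rw [conjv_smul, conjv_vt]
    exact Submodule.smul_mem _ _ (Submodule.subset_span (Set.mem_singleton _))
  · rw [Submodule.span_le]
    rintro x hx
    rw [Set.mem_singleton_iff] at hx
    subst hx
    apply Submodule.subset_span
    exact ⟨_, Submodule.mem_span_singleton_self _, conjv_vt t⟩

/-- for every `t > 0`, `k_t = span_ℂ{X - t·i·Y}` satisfies
`k_t ∩ conj(k_t) = {0}`, `k_t ⊕ conj(k_t)` is not a subalgebra of `sl(2,ℝ)_ℂ`,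
and `[Z, X - t·i·Y] ∈ k_t` if and only if `t = 1` (normality/Sasaki condition). -/
theorem stmt2 (t : ℝ) (ht : 0 < t) :
    kt t ⊓ ktbar t = ⊥ ∧
    ¬ (∀ a ∈ kt t ⊔ ktbar t, ∀ b ∈ kt t ⊔ ktbar t, sl2br a b ∈ kt t ⊔ ktbar t) ∧
    (sl2br Zv (Xv - ((t : ℂ) * I) • Yv) ∈ kt t ↔ t = 1) := by
  have htC : ((t:ℂ) * I) ≠ 0 := by
    simp [Complex.ext_iff, ne_of_gt ht]
  refine ⟨?_, ?_, ?_⟩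
  · rw [eq_bot_iff]
    intro x hx
    rw [Submodule.mem_inf] at hx
    obtain ⟨hx1, hx2⟩ := hx
    rw [kt, Submodule.mem_span_singleton] at hx1
    rw [ktbar_eq, Submodule.mem_span_singleton] at hx2
    obtain ⟨c, rfl⟩ := hx1
    obtain ⟨d, hd⟩ := hx2
    rw [vt_apply] at hd ⊢
    have h0 : d = c := by simpa using congrFun hd 0
    have h1 : d * ((t:ℂ) * I) = -(c * ((t:ℂ) * I)) := by simpa using congrFun hd 1
    subst h0
    have hc : d = 0 := by
      have h2 : d * ((2:ℂ) * ((t:ℂ) * I)) = 0 := by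
        linear_combination h1
      rcases mul_eq_zero.mp h2 with h | h
      · exact h
      · exact absurd (by linear_combination h / 2) htC
    rw [Submodule.mem_bot, hc, zero_smul]

  · intro h
    set v : Fin 3 → ℂ := Xv - ((t : ℂ) * I) • Yv with hv
    set w : Fin 3 → ℂ := ![1, (t:ℂ) * I, 0] with hw
    have hvmem : v ∈ kt t ⊔ ktbar t :=
      Submodule.mem_sup_left (Submodule.mem_span_singleton_self _)
    have hwmem : w ∈ kt t ⊔ ktbar t := by
      apply Submodule.mem_sup_right
      rw [ktbar_eq]
      exact Submodule.mem_span_singleton_self _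
    have hbr := h v hvmem w hwmem
    have hzero : ∀ u ∈ kt t ⊔ ktbar t, u 2 = 0 := by
      intro u hu
      have : kt t ⊔ ktbar t ≤ LinearMap.ker (LinearMap.proj 2 : (Fin 3 → ℂ) →ₗ[ℂ] ℂ) := by
        apply sup_le
        · rw [kt, Submodule.span_le]
          rintro x hx
          rw [Set.mem_singleton_iff] at hx
          subst hx
          rw [vt_apply]
          simp [LinearMap.mem_ker]
        · rw [ktbar_eq, Submodule.span_le]
          rintro x hx
          rw [Set.mem_singleton_iff] at hx
          subst hx
          simp [LinearMap.mem_ker]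
      exact this hu
    have h2 := hzero _ hbr
    rw [hv, vt_apply] at h2
    have h2' : (2:ℂ) * ((t:ℂ) * I) = 0 := by
      have := h2
      simp only [sl2br, hw, Matrix.cons_val_zero, Matrix.cons_val_one, Matrix.head_cons,
        Matrix.cons_val_two, Matrix.tail_cons] at this
      linear_combination this
    exact htC (by linear_combination h2' / 2)
  · rw [kt, Submodule.mem_span_singleton]
    constructor
    · rintro ⟨c, hc⟩
      rw [vt_apply] at hc
      have h0 := congrFun hc 0
      have h1 := congrFun hc 1
      simp [sl2br, Zv, vt_apply] at h0 h1
      subst h0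
      have ht2 : (t:ℂ)^2 = 1 := by
        linear_combination h1 + (t:ℂ)^2 * I_sq
      have : (t:ℝ)^2 = 1 := by
        exact_mod_cast ht2
      nlinarith
    · rintro rfl
      refine ⟨-I, ?_⟩
      rw [vt_apply]
      funext i
      fin_cases i <;> simp [sl2br, Zv, vt_apply]
end

section
/- Let g be a nilpotent real Lie algebra of dimension 2m+1 admitting a non-degenerate CR structure with underlying contact hyperplane D = ker φ for a contact form φ (i.e., φ ∧ (dφ)^m ≠ 0, where dφ(X,Y) = -φ([X,Y])). Then the center Z(g) of g is one-dimensional, Z(g) ∩ D = {0}, and Z(g) is spanned by the Reeb field η (the unique η with φ(η) = 1 and i_η dφ = 0). -/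
/-- if a nilpotent real Lie algebra `g` of dimension `2m+1` carries a
contact form `φ` (with `dφ(x,y) = -φ⁅x,y⁆` non-degenerate on `D = ker φ`) coming from a
non-degenerate CR structure, and `η` is the Reeb field (`φ(η) = 1`, `i_η dφ = 0`), then the
center of `g` is one-dimensional, meets `D` trivially, and is spanned by `η`. -/
theorem stmt4 (m : ℕ) (g : Type*) [LieRing g] [LieAlgebra ℝ g]
    [LieRing.IsNilpotent g] [FiniteDimensional ℝ g]
    (hdim : Module.finrank ℝ g = 2 * m + 1)
    (φ : g →ₗ[ℝ] ℝ) (hφ : φ ≠ 0)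
    (hnd : ∀ x, φ x = 0 → (∀ y, φ y = 0 → φ ⁅x, y⁆ = 0) → x = 0)
    (η : g) (hη1 : φ η = 1) (hη2 : ∀ y : g, φ ⁅η, y⁆ = 0) :
    Module.finrank ℝ (LieAlgebra.center ℝ g) = 1 ∧
    (LieAlgebra.center ℝ g).toSubmodule ⊓ LinearMap.ker φ = ⊥ ∧
    (LieAlgebra.center ℝ g).toSubmodule = Submodule.span ℝ {η} := by
  have hη0 : η ≠ 0 := by
    intro h; rw [h] at hη1; simp at hη1
  -- key: central elements are multiples of η
  have key : ∀ z : g, (∀ x : g, ⁅x, z⁆ = 0) → z = φ z • η := by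
    intro z hz
    have hw : z - φ z • η = 0 := by
      apply hnd
      · simp [hη1]
      · intro y hy
        have hzy : ⁅z, y⁆ = 0 := by rw [← lie_skew, hz y, neg_zero]
        rw [sub_lie, smul_lie, hzy]
        simp [hη2 y]
    exact (sub_eq_zero.mp hw)
  -- g is nontrivial
  have : Nontrivial g := by
    obtain ⟨x, hx⟩ : ∃ x, φ x ≠ 0 := by
      by_contra h
      push_neg at h
      exact hφ (by ext x; simp [h x])
    exact ⟨x, 0, fun h => hx (by simp [h])⟩
  have : Nontrivial (LieAlgebra.center ℝ g) :=
    LieAlgebra.non_trivial_center_of_isNilpotent (R := ℝ) (L := g)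
  obtain ⟨z, hz0⟩ := exists_ne (0 : LieAlgebra.center ℝ g)
  have hzc : ∀ x : g, ⁅x, (z : g)⁆ = 0 :=
    (LieModule.mem_maxTrivSubmodule ℝ g g (z : g)).mp z.2
  have hz' : (z : g) = φ z • η := key z hzc
  have hφz : φ z ≠ 0 := by
    intro h
    apply hz0
    have : (z : g) = 0 := by rw [hz', h, zero_smul]
    exact Subtype.ext this
  have hηc : η ∈ LieAlgebra.center ℝ g := by
    rw [LieModule.mem_maxTrivSubmodule]
    intro x
    have heq : η = (φ (z : g))⁻¹ • (z : g) := by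
      calc η = (φ (z : g))⁻¹ • ((φ (z : g)) • η) := by
              rw [smul_smul, inv_mul_cancel₀ hφz, one_smul]
        _ = (φ (z : g))⁻¹ • (z : g) := by rw [← hz']
    rw [heq, lie_smul, hzc x, smul_zero]
  have hspan : (LieAlgebra.center ℝ g).toSubmodule = Submodule.span ℝ {η} := by
    apply le_antisymm
    · intro x hx
      have hxc : ∀ y : g, ⁅y, x⁆ = 0 :=
        (LieModule.mem_maxTrivSubmodule ℝ g g x).mp hx
      rw [key x hxc]
      exact Submodule.smul_mem _ _ (Submodule.mem_span_singleton_self η)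
    · rw [Submodule.span_le, Set.singleton_subset_iff]
      exact hηc
  refine ⟨?_, ?_, hspan⟩
  · have h1 : Module.finrank ℝ (Submodule.span ℝ ({η} : Set g)) = 1 :=
      finrank_span_singleton hη0
    rw [← h1]
    exact LinearEquiv.finrank_eq (LinearEquiv.ofEq _ _ hspan)
  · rw [hspan, eq_bot_iff]
    rintro x ⟨hx1, hx2⟩
    obtain ⟨c, rfl⟩ := Submodule.mem_span_singleton.mp hx1
    have : c = 0 := by
      have := (LinearMap.mem_ker.mp hx2)
      simpa [hη1] using this
    simp [this]
end

section
/- Let g be a nilpotent real Lie algebra of dimension 2m+1 with a contact form φ whose restriction dφ|_D is non-degenerate on D = ker φ. Then the quotient n = g / Z(g) is a nilpotent Lie algebra of dimension 2m carrying a non-degenerate closed 2-form induced by dφ (i.e., n is symplectic). If moreover dφ|_D is definite (the strictly pseudoconvex case compatible with an integrable complex structure J on D), then n is abelian, hence g is a Heisenberg Lie algebra. -/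
lemma stmt5_darboux (g : Type*) [LieRing g] [LieAlgebra ℝ g] [FiniteDimensional ℝ g]
    (φ : g →ₗ[ℝ] ℝ) (J : g →ₗ[ℝ] g)
    (hJ1 : ∀ x, φ x = 0 → φ (J x) = 0)
    (hJ2 : ∀ x, φ x = 0 → J (J x) = -x)
    (hJ3 : ∀ x y, φ x = 0 → φ y = 0 → φ ⁅J x, J y⁆ = φ ⁅x, y⁆)
    (hJ4 : ∀ x, φ x = 0 → x ≠ 0 → 0 < φ ⁅x, J x⁆) :
    ∀ (N : ℕ) (W : Submodule ℝ g), W ≤ LinearMap.ker φ → (∀ x ∈ W, J x ∈ W) →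
      Module.finrank ℝ W ≤ N →
    ∃ (k : ℕ) (e : Fin k → g), (∀ i, e i ∈ W) ∧
      (∀ i j, φ ⁅e i, J (e j)⁆ = if i = j then 1 else 0) ∧
      (∀ i j, φ ⁅e i, e j⁆ = 0) ∧
      W ≤ Submodule.span ℝ (Set.range e ∪ Set.range (fun i => J (e i))) := by
  have hsymm : ∀ x y, φ x = 0 → φ y = 0 → φ ⁅x, J y⁆ = φ ⁅y, J x⁆ := by
    intro x y hx hy
    have h := hJ3 (J x) y (hJ1 x hx) hy
    rw [hJ2 x hx, neg_lie, map_neg] at h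
    have h2 : φ ⁅y, J x⁆ = -φ ⁅J x, y⁆ := by rw [← lie_skew (J x) y, map_neg, neg_neg]
    linarith
  intro N
  induction N with
  | zero =>
    intro W hWφ hWJ hfr
    refine ⟨0, Fin.elim0, fun i => i.elim0, fun i => i.elim0, fun i => i.elim0, ?_⟩
    have : W = ⊥ := Submodule.finrank_eq_zero.mp (Nat.le_zero.mp hfr)
    simp [this]
  | succ N ih =>
    intro W hWφ hWJ hfr
    rcases eq_or_ne W ⊥ with hW | hW
    · refine ⟨0, Fin.elim0, fun i => i.elim0, fun i => i.elim0, fun i => i.elim0, ?_⟩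
      simp [hW]
    · have hex : ∃ e₀, e₀ ∈ W ∧ φ e₀ = 0 ∧ φ ⁅e₀, J e₀⁆ = 1 := by
        obtain ⟨v, hvW, hv0⟩ := Submodule.exists_mem_ne_zero_of_ne_bot hW
        have hvφ : φ v = 0 := hWφ hvW
        have hvpos : 0 < φ ⁅v, J v⁆ := hJ4 v hvφ hv0
        have hcpos : 0 < Real.sqrt (φ ⁅v, J v⁆) := Real.sqrt_pos.mpr hvpos
        have hc2 : Real.sqrt (φ ⁅v, J v⁆) * Real.sqrt (φ ⁅v, J v⁆) = φ ⁅v, J v⁆ :=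
          Real.mul_self_sqrt hvpos.le
        refine ⟨(Real.sqrt (φ ⁅v, J v⁆))⁻¹ • v, W.smul_mem _ hvW, by simp [hvφ], ?_⟩
        rw [map_smul, smul_lie, lie_smul, map_smul, map_smul]
        simp only [smul_eq_mul]
        rw [← hc2]
        field_simp
        rw [Real.sqrt_sq hcpos.le]
      obtain ⟨e₀, he₀W, he₀φ, hnorm⟩ := hex
      have hee : φ ⁅e₀, e₀⁆ = 0 := by simp
      set L₁ : g →ₗ[ℝ] ℝ := φ ∘ₗ (LieAlgebra.ad ℝ g e₀) ∘ₗ J with hL₁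
      set L₂ : g →ₗ[ℝ] ℝ := φ ∘ₗ (LieAlgebra.ad ℝ g e₀) with hL₂
      have hL₁a : ∀ w, L₁ w = φ ⁅e₀, J w⁆ := fun w => rfl
      have hL₂a : ∀ w, L₂ w = φ ⁅e₀, w⁆ := fun w => rfl
      set W' : Submodule ℝ g := W ⊓ LinearMap.ker L₁ ⊓ LinearMap.ker L₂ with hW'
      have hW'mem : ∀ w, w ∈ W' ↔ w ∈ W ∧ φ ⁅e₀, J w⁆ = 0 ∧ φ ⁅e₀, w⁆ = 0 := by
        intro w
        simp [hW', LinearMap.mem_ker, hL₁a, hL₂a, and_assoc]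
      have hW'W : W' ≤ W := le_trans inf_le_left inf_le_left
      have hW'φ : W' ≤ LinearMap.ker φ := fun w hw => hWφ (hW'W hw)
      have hW'J : ∀ x ∈ W', J x ∈ W' := by
        intro x hx
        obtain ⟨hxW, hx1, hx2⟩ := (hW'mem x).mp hx
        refine (hW'mem (J x)).mpr ⟨hWJ x hxW, ?_, hx1⟩
        rw [hJ2 x (hWφ hxW), lie_neg, map_neg, hx2, neg_zero]
      have hlt : W' < W := by
        refine lt_of_le_of_ne hW'W ?_
        intro h
        have : e₀ ∈ W' := h ▸ he₀W
        have := ((hW'mem e₀).mp this).2.1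
        rw [hnorm] at this; norm_num at this
      have hfr' : Module.finrank ℝ W' ≤ N := by
        have := Submodule.finrank_lt_finrank_of_lt hlt
        omega
      obtain ⟨k, e', he'W, he'1, he'2, he'span⟩ := ih W' hW'φ hW'J hfr'
      have he'φ : ∀ i, φ (e' i) = 0 := fun i => hWφ (hW'W (he'W i))
      have he'Wbig : ∀ i, e' i ∈ W := fun i => hW'W (he'W i)
      refine ⟨k + 1, Fin.cons e₀ e', ?_, ?_, ?_, ?_⟩
      · intro i
        refine Fin.cases ?_ ?_ i
        · simpa using he₀W
        · intro j; simpa using he'Wbig j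
      · intro i j
        refine Fin.cases ?_ ?_ i <;> [skip; intro i'] <;> refine Fin.cases ?_ ?_ j <;>
          try intro j'
        · simpa using hnorm
        · simp only [Fin.cons_zero, Fin.cons_succ]
          have h := ((hW'mem (e' j')).mp (he'W j')).2.1
          rw [h, if_neg (Ne.symm (Fin.succ_ne_zero j'))]
        · simp only [Fin.cons_zero, Fin.cons_succ]
          rw [hsymm (e' i') e₀ (he'φ i') he₀φ]
          have h := ((hW'mem (e' i')).mp (he'W i')).2.1
          rw [h, if_neg (Fin.succ_ne_zero i')]
        · simp only [Fin.cons_succ]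
          rw [he'1 i' j']
          simp [Fin.succ_inj]
      · intro i j
        refine Fin.cases ?_ ?_ i <;> [skip; intro i'] <;> refine Fin.cases ?_ ?_ j <;>
          try intro j'
        · simpa using hee
        · simp only [Fin.cons_zero, Fin.cons_succ]
          exact ((hW'mem (e' j')).mp (he'W j')).2.2
        · simp only [Fin.cons_zero, Fin.cons_succ]
          rw [← lie_skew, map_neg, ((hW'mem (e' i')).mp (he'W i')).2.2, neg_zero]
        · simpa using he'2 i' j'
      · -- span
        intro w hw
        have hwφ : φ w = 0 := hWφ hw
        have hJe₀W : J e₀ ∈ W := hWJ e₀ he₀W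
        have hw' : w - φ ⁅e₀, J w⁆ • e₀ - φ ⁅e₀, w⁆ • J e₀ ∈ W' := by
          refine (hW'mem _).mpr ⟨?_, ?_, ?_⟩
          · exact W.sub_mem (W.sub_mem hw (W.smul_mem _ he₀W)) (W.smul_mem _ hJe₀W)
          · rw [map_sub, map_sub, map_smul, map_smul, hJ2 e₀ he₀φ, lie_sub, lie_sub,
              lie_smul, lie_smul, lie_neg, map_sub, map_sub, map_smul, map_smul, map_neg,
              hnorm, hee]
            simp only [smul_eq_mul]; ring
          · rw [lie_sub, lie_sub, lie_smul, lie_smul, map_sub, map_sub, map_smul, map_smul,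
              hnorm, hee]
            simp only [smul_eq_mul]; ring
        have hsub : Submodule.span ℝ (Set.range e' ∪ Set.range (fun i => J (e' i))) ≤
            Submodule.span ℝ (Set.range (Fin.cons e₀ e' : Fin (k+1) → g) ∪
              Set.range (fun i => J ((Fin.cons e₀ e' : Fin (k+1) → g) i))) := by
          apply Submodule.span_mono
          rintro x (⟨i, rfl⟩ | ⟨i, rfl⟩)
          · exact Or.inl ⟨i.succ, by simp⟩
          · exact Or.inr ⟨i.succ, by simp⟩
        have h1 := hsub (he'span hw')
        have he₀S : e₀ ∈ Submodule.span ℝ (Set.range (Fin.cons e₀ e' : Fin (k+1) → g) ∪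
              Set.range (fun i => J ((Fin.cons e₀ e' : Fin (k+1) → g) i))) :=
          Submodule.subset_span (Or.inl ⟨0, by simp⟩)
        have hJe₀S : J e₀ ∈ Submodule.span ℝ (Set.range (Fin.cons e₀ e' : Fin (k+1) → g) ∪
              Set.range (fun i => J ((Fin.cons e₀ e' : Fin (k+1) → g) i))) :=
          Submodule.subset_span (Or.inr ⟨0, by simp⟩)
        have hrw : w = (w - φ ⁅e₀, J w⁆ • e₀ - φ ⁅e₀, w⁆ • J e₀) + φ ⁅e₀, J w⁆ • e₀ +
            φ ⁅e₀, w⁆ • J e₀ := by abel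
        rw [hrw]
        exact Submodule.add_mem _ (Submodule.add_mem _ h1 (Submodule.smul_mem _ _ he₀S))
          (Submodule.smul_mem _ _ hJe₀S)



/-- let `g` be a nilpotent real Lie algebra of dimension `2m+1` with a contact
form `φ` whose differential `dφ(x,y) = -φ⁅x,y⁆` is non-degenerate on `D = ker φ`. Then the
quotient `n = g / Z(g)` has dimension `2m` and carries a closed non-degenerate (symplectic)
2-form induced by `dφ`. If moreover `dφ|_D` is definite with respect to an integrable
compatible complex structure `J` on `D` (the strictly pseudoconvex case), then `n` is
abelian (all brackets of `g` are central), hence `g` is a Heisenberg Lie algebra: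
there is a basis `X_1,…,X_m, Y_1,…,Y_m, Z` whose only nonzero brackets are
`[X_i, Y_i] = -Z`, with `Z` central. -/
theorem stmt5 (m : ℕ) (g : Type*) [LieRing g] [LieAlgebra ℝ g]
    [LieRing.IsNilpotent g] [FiniteDimensional ℝ g]
    (hdim : Module.finrank ℝ g = 2 * m + 1)
    (φ : g →ₗ[ℝ] ℝ) (hφ : φ ≠ 0)
    (hnd : ∀ x, φ x = 0 → (∀ y, φ y = 0 → φ ⁅x, y⁆ = 0) → x = 0) :
    (Module.finrank ℝ (g ⧸ LieAlgebra.center ℝ g) = 2 * m ∧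
      ∃ ω : (g ⧸ LieAlgebra.center ℝ g) →ₗ[ℝ] (g ⧸ LieAlgebra.center ℝ g) →ₗ[ℝ] ℝ,
        (∀ x y : g, ω (LieSubmodule.Quotient.mk x) (LieSubmodule.Quotient.mk y)
            = -φ ⁅x, y⁆) ∧
        (∀ v, (∀ w, ω v w = 0) → v = 0) ∧
        (∀ a b c : g ⧸ LieAlgebra.center ℝ g,
          ω ⁅a, b⁆ c + ω ⁅b, c⁆ a + ω ⁅c, a⁆ b = 0)) ∧
    (∀ J : g →ₗ[ℝ] g,
      (∀ x, φ x = 0 → φ (J x) = 0) →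
      (∀ x, φ x = 0 → J (J x) = -x) →
      (∀ x y, φ x = 0 → φ y = 0 → φ ⁅J x, J y⁆ = φ ⁅x, y⁆) →
      (∀ x, φ x = 0 → x ≠ 0 → 0 < φ ⁅x, J x⁆) →
      (∀ x y, φ x = 0 → φ y = 0 →
        φ (⁅J x, J y⁆ - ⁅x, y⁆) = 0 ∧
        J (⁅J x, J y⁆ - ⁅x, y⁆) = ⁅J x, y⁆ + ⁅x, J y⁆) →
      ((∀ x y : g, ⁅x, y⁆ ∈ LieAlgebra.center ℝ g) ∧
        ∃ b : Module.Basis (Fin m ⊕ Fin m ⊕ Unit) ℝ g,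
          (∀ i j : Fin m, ⁅b (Sum.inl i), b (Sum.inr (Sum.inl j))⁆
              = if i = j then -b (Sum.inr (Sum.inr ())) else 0) ∧
          (∀ i j : Fin m, ⁅b (Sum.inl i), b (Sum.inl j)⁆ = 0) ∧
          (∀ i j : Fin m, ⁅b (Sum.inr (Sum.inl i)), b (Sum.inr (Sum.inl j))⁆ = 0) ∧
          (∀ v : g, ⁅b (Sum.inr (Sum.inr ())), v⁆ = 0))) := by
  classical
  have hg : Nontrivial g := Module.nontrivial_of_finrank_pos (R := ℝ) (by omega)
  -- characterize center membership
  have hcent : ∀ u : g, u ∈ LieAlgebra.center ℝ g ↔ ∀ x : g, ⁅x, u⁆ = 0 := fun u =>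
    LieModule.mem_maxTrivSubmodule ℝ g g u
  have hcent' : ∀ u : g, u ∈ LieAlgebra.center ℝ g → ∀ x : g, ⁅u, x⁆ = 0 := by
    intro u hu x
    rw [← lie_skew, (hcent u).mp hu x, neg_zero]
  have hker0 : ∀ u, u ∈ LieAlgebra.center ℝ g → φ u = 0 → u = 0 := by
    intro u hu h0
    exact hnd u h0 (fun y _ => by rw [hcent' u hu y, map_zero])
  -- find Z
  have hZex : ∃ Z : g, Z ∈ LieAlgebra.center ℝ g ∧ φ Z = 1 := by
    have : Nontrivial (LieModule.maxTrivSubmodule ℝ g g) :=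
      LieModule.nontrivial_max_triv_of_isNilpotent ℝ g g
    obtain ⟨z, hzne⟩ := exists_ne (0 : LieModule.maxTrivSubmodule ℝ g g)
    have hz : (z : g) ∈ LieAlgebra.center ℝ g := z.2
    have hzne' : (z : g) ≠ 0 := fun h => hzne (Subtype.ext h)
    have hφz : φ z ≠ 0 := fun h => hzne' (hker0 _ hz h)
    refine ⟨(φ z)⁻¹ • z, ?_, ?_⟩
    · exact Submodule.smul_mem _ _ hz
    · rw [map_smul, smul_eq_mul, inv_mul_cancel₀ hφz]
  obtain ⟨Z, hZc, hZφ⟩ := hZex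
  have hZne : Z ≠ 0 := fun h => by rw [h, map_zero] at hZφ; norm_num at hZφ
  have hZlie : ∀ x : g, ⁅Z, x⁆ = 0 := hcent' Z hZc
  have hZlie' : ∀ x : g, ⁅x, Z⁆ = 0 := (hcent Z).mp hZc
  have hZrep : ∀ u, u ∈ LieAlgebra.center ℝ g → u = φ u • Z := by
    intro u hu
    have h1 : u - φ u • Z ∈ LieAlgebra.center ℝ g :=
      Submodule.sub_mem _ hu (Submodule.smul_mem _ _ hZc)
    have h2 : φ (u - φ u • Z) = 0 := by
      rw [map_sub, map_smul, smul_eq_mul, hZφ, mul_one, sub_self]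
    have := hker0 _ h1 h2
    rwa [sub_eq_zero] at this
  constructor
  · constructor
    · -- finrank
      have hcsub : (LieAlgebra.center ℝ g).toSubmodule = Submodule.span ℝ {Z} := by
        apply le_antisymm
        · intro u hu
          rw [Submodule.mem_span_singleton]
          exact ⟨φ u, (hZrep u hu).symm⟩
        · rw [Submodule.span_le, Set.singleton_subset_iff]
          exact hZc
      have hfrc : Module.finrank ℝ (LieAlgebra.center ℝ g).toSubmodule = 1 := by
        rw [hcsub]
        exact finrank_span_singleton hZne
      have hq := Submodule.finrank_quotient_add_finrank (LieAlgebra.center ℝ g).toSubmodule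
      rw [hfrc, hdim] at hq
      have h2 : Module.finrank ℝ (g ⧸ (LieAlgebra.center ℝ g).toSubmodule) = 2 * m := by omega
      exact h2
    · -- the symplectic form
      set C := (LieAlgebra.center ℝ g).toSubmodule with hC
      set B : g →ₗ[ℝ] g →ₗ[ℝ] ℝ := LinearMap.mk₂ ℝ (fun a b => φ ⁅a, b⁆)
        (fun a a' b => by simp [add_lie])
        (fun c a b => by simp [smul_lie])
        (fun a b b' => by simp [lie_add])
        (fun c a b => by simp [lie_smul]) with hB
      have hBapp : ∀ a b : g, B a b = φ ⁅a, b⁆ := fun a b => rfl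
      have h₁ : C ≤ LinearMap.ker B := by
        intro a ha
        rw [LinearMap.mem_ker]
        ext b
        rw [hBapp, hcent' a ha b, map_zero, LinearMap.zero_apply]
      have h₂ : C ≤ LinearMap.ker (Submodule.liftQ C B h₁).flip := by
        intro b hb
        rw [LinearMap.mem_ker]
        apply LinearMap.ext
        intro q
        obtain ⟨a, rfl⟩ := Submodule.Quotient.mk_surjective C q
        show (Submodule.liftQ C B h₁) (Submodule.Quotient.mk a) b = 0
        rw [Submodule.liftQ_apply, hBapp, (hcent b).mp hb a, map_zero]
      refine ⟨Submodule.liftQ C (Submodule.liftQ C B h₁).flip h₂, ?_, ?_, ?_⟩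
      · intro x y
        show φ ⁅y, x⁆ = -φ ⁅x, y⁆
        rw [← lie_skew, map_neg]
      · intro v hv
        obtain ⟨x, rfl⟩ := Submodule.Quotient.mk_surjective C v
        have hx : ∀ y : g, φ ⁅x, y⁆ = 0 := by
          intro y
          have h2 : φ ⁅y, x⁆ = 0 := hv (Submodule.Quotient.mk y)
          rw [← lie_skew, map_neg] at h2
          linarith
        have hx' : x - φ x • Z = 0 := by
          apply hnd
          · rw [map_sub, map_smul, smul_eq_mul, hZφ, mul_one, sub_self]
          · intro y _
            rw [sub_lie, smul_lie, hcent' Z hZc y, smul_zero, sub_zero, hx y]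
        rw [Submodule.Quotient.mk_eq_zero]
        have hxz : x = φ x • Z := by rwa [sub_eq_zero] at hx'
        rw [hxz]
        exact Submodule.smul_mem _ _ hZc
      · intro a b c
        obtain ⟨x, rfl⟩ := Submodule.Quotient.mk_surjective C a
        obtain ⟨y, rfl⟩ := Submodule.Quotient.mk_surjective C b
        obtain ⟨z, rfl⟩ := Submodule.Quotient.mk_surjective C c
        have hbrq : ∀ u v : g, (⁅(LieSubmodule.Quotient.mk u : g ⧸ LieAlgebra.center ℝ g),
            (LieSubmodule.Quotient.mk v : g ⧸ LieAlgebra.center ℝ g)⁆ :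
              g ⧸ LieAlgebra.center ℝ g) = LieSubmodule.Quotient.mk ⁅u, v⁆ :=
          fun u v => (LieSubmodule.Quotient.mk_bracket (I := LieAlgebra.center ℝ g) u v).symm
        rw [hbrq, hbrq, hbrq]
        show φ ⁅z, ⁅x,y⁆⁆ + φ ⁅x, ⁅y,z⁆⁆ + φ ⁅y, ⁅z,x⁆⁆ = 0
        have hj : ⁅z, ⁅x,y⁆⁆ + ⁅x, ⁅y,z⁆⁆ + ⁅y, ⁅z,x⁆⁆ = (0 : g) := by
          have := lie_jacobi x y z
          linear_combination (norm := abel) this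
        rw [← map_add, ← map_add, hj, map_zero]
  · intro J hJ1 hJ2 hJ3 hJ4 hJ5
    have hskew : ∀ x y, φ x = 0 → φ y = 0 → φ ⁅J x, y⁆ = -φ ⁅x, J y⁆ := by
      intro x y hx hy
      have h := hJ3 (J x) y (hJ1 x hx) hy
      rw [hJ2 x hx, neg_lie, map_neg] at h
      linarith
    have hlcs : LieModule.lowerCentralSeries ℝ g g 1 ≤ LieAlgebra.center ℝ g := by
      by_contra hcon
      have hex : ∃ n, LieModule.lowerCentralSeries ℝ g g n ≤ LieAlgebra.center ℝ g := by
        obtain ⟨n, hn⟩ := LieModule.IsNilpotent.nilpotent ℝ g g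
        exact ⟨n, hn ▸ bot_le⟩
      set n₀ := Nat.find hex with hn₀
      have hspec : LieModule.lowerCentralSeries ℝ g g n₀ ≤ LieAlgebra.center ℝ g := Nat.find_spec hex
      have h2le : 2 ≤ n₀ := by
        by_contra hlt
        interval_cases n₀
        · exact hcon (le_trans (LieModule.antitone_lowerCentralSeries ℝ g g (by norm_num)) hspec)
        · exact hcon hspec
      have hnotle : ¬ LieModule.lowerCentralSeries ℝ g g (n₀ - 1) ≤ LieAlgebra.center ℝ g :=
        Nat.find_min hex (by omega)
      obtain ⟨w, hw, hwc⟩ := SetLike.not_le_iff_exists.mp hnotle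
      have hwbr : ∀ y : g, ⁅w, y⁆ ∈ LieAlgebra.center ℝ g := by
        intro y
        have h1 : ⁅y, w⁆ ∈ LieModule.lowerCentralSeries ℝ g g n₀ := by
          have heq : n₀ - 1 + 1 = n₀ := by omega
          have h2 : LieModule.lowerCentralSeries ℝ g g (n₀ - 1 + 1) =
              ⁅(⊤ : LieIdeal ℝ g), LieModule.lowerCentralSeries ℝ g g (n₀ - 1)⁆ :=
            LieModule.lowerCentralSeries_succ ℝ g g (n₀ - 1)
          rw [heq] at h2
          rw [h2]
          exact LieSubmodule.lie_mem_lie (LieSubmodule.mem_top y) hw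
        rw [← lie_skew]
        exact Submodule.neg_mem _ (hspec h1)
      set ζ : g := w - φ w • Z with hζ
      have hζφ : φ ζ = 0 := by
        rw [hζ, map_sub, map_smul, smul_eq_mul, hZφ, mul_one, sub_self]
      have hζne : ζ ≠ 0 := by
        intro h
        apply hwc
        have : w = φ w • Z := by rwa [hζ, sub_eq_zero] at h
        rw [this]
        exact Submodule.smul_mem _ _ hZc
      have hζbr : ∀ y : g, ⁅ζ, y⁆ = φ ⁅ζ, y⁆ • Z := by
        intro y
        have h1 : ⁅ζ, y⁆ = ⁅w, y⁆ := by
          rw [hζ, sub_lie, smul_lie, hZlie y, smul_zero, sub_zero]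
        rw [h1]
        exact hZrep _ (hwbr y)
      have hζ2 : ∀ a b : g, ⁅ζ, ⁅a, b⁆⁆ = 0 := by
        intro a b
        rw [leibniz_lie, hζbr a, hζbr b, smul_lie, hZlie b, smul_zero, lie_smul, hZlie' a,
          smul_zero, zero_add]
      obtain ⟨η, hη⟩ : ∃ η : g, η = J ζ := ⟨_, rfl⟩
      have hηφ : φ η = 0 := by rw [hη]; exact hJ1 ζ hζφ
      have hJη : J η = -ζ := by rw [hη]; exact hJ2 ζ hζφ
      obtain ⟨A, hAdef⟩ : ∃ A : g → g, ∀ x, A x = ⁅η, x⁆ - φ ⁅η, x⁆ • Z :=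
        ⟨_, fun _ => rfl⟩
      have hAφ : ∀ x, φ (A x) = 0 := by
        intro x
        rw [hAdef, map_sub, map_smul, smul_eq_mul, hZφ, mul_one, sub_self]
      have hAJ : ∀ y, φ y = 0 → A (J y) = -(J (A y)) := by
        intro y hy
        obtain ⟨h5a, h5b⟩ := hJ5 ζ y hζφ hy
        rw [← hη] at h5a h5b
        have hφeq : φ ⁅η, J y⁆ = φ ⁅ζ, y⁆ := by
          rw [map_sub, sub_eq_zero] at h5a
          exact h5a
        have hu : ⁅η, J y⁆ - ⁅ζ, y⁆ = A (J y) := by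
          rw [hAdef (J y), hφeq]
          conv_lhs => rw [hζbr y]
        rw [hu] at h5b
        have hcanc : φ ⁅η, y⁆ = -φ ⁅ζ, J y⁆ := by rw [hη]; exact hskew ζ y hζφ hy
        have h5b' : J (A (J y)) = A y := by
          rw [h5b, hAdef y, hcanc]
          conv_lhs => rw [hζbr (J y)]
          rw [neg_smul, sub_neg_eq_add]
        have hcj := congrArg J h5b'
        rw [hJ2 _ (hAφ (J y))] at hcj
        rw [← hcj, neg_neg]
      -- (★)
      have hstar : ∀ x y : g, φ ⁅⁅x, y⁆, η⁆ = φ ⁅A y, x⁆ - φ ⁅A x, y⁆ := by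
        intro x y
        have hkey : ∀ u v : g, ⁅u, ⁅v, η⁆⁆ = ⁅A v, u⁆ := by
          intro u v
          have h1 : ⁅v, η⁆ = -(A v) - φ ⁅η, v⁆ • Z := by
            rw [hAdef v, ← lie_skew]
            abel
          rw [h1, lie_sub, lie_neg, lie_smul, hZlie' u, smul_zero, sub_zero, lie_skew]
        rw [lie_lie, map_sub, hkey x y, hkey y x]
      -- (★J)
      have hT : ∀ x y : g, φ x = 0 → φ y = 0 → φ ⁅⁅x, y⁆, η⁆ = 0 := by
        intro x y hx hy
        have h1 : φ ⁅⁅J x, J y⁆, η⁆ = -φ ⁅⁅x, y⁆, η⁆ := by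
          rw [hstar (J x) (J y), hAJ x hx, hAJ y hy, neg_lie, neg_lie, map_neg, map_neg,
            hJ3 (A y) x (hAφ y) hx, hJ3 (A x) y (hAφ x) hy, hstar x y]
          ring
        have h2 : φ ⁅⁅J x, J y⁆, η⁆ = φ ⁅⁅x, y⁆, η⁆ := by
          obtain ⟨hδ1, hδ2⟩ := hJ5 x y hx hy
          have e1 : φ ⁅J (⁅J x, J y⁆ - ⁅x, y⁆), J η⁆ = φ ⁅⁅J x, J y⁆ - ⁅x, y⁆, η⁆ :=
            hJ3 _ η hδ1 hηφ
          have e2 : J η = -ζ := hJη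
          rw [hδ2, e2] at e1
          have e3 : φ ⁅⁅J x, y⁆ + ⁅x, J y⁆, -ζ⁆ = 0 := by
            have e4 : ∀ a b : g, φ ⁅⁅a, b⁆, ζ⁆ = 0 := by
              intro a b
              rw [← lie_skew, hζ2 a b, neg_zero, map_zero]
            rw [lie_neg, add_lie, map_neg, map_add, e4, e4]
            norm_num
          rw [e3] at e1
          have e5 : φ ⁅⁅J x, J y⁆ - ⁅x, y⁆, η⁆ = 0 := e1.symm
          rw [sub_lie, map_sub, sub_eq_zero] at e5
          exact e5
        rw [h2] at h1
        have h4 : φ ⁅⁅x, y⁆, η⁆ + φ ⁅⁅x, y⁆, η⁆ = 0 := by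
          nth_rewrite 2 [h1]
          rw [add_neg_cancel]
        have h5 : (2 : ℝ) * φ ⁅⁅x, y⁆, η⁆ = 0 := by rw [two_mul]; exact h4
        have h6 := mul_eq_zero.mp h5
        rcases h6 with h6 | h6
        · norm_num at h6
        · exact h6
      have hTall : ∀ a b : g, φ ⁅⁅a, b⁆, η⁆ = 0 := by
        intro a b
        have h1 : ⁅a, b⁆ = ⁅a - φ a • Z, b - φ b • Z⁆ := by
          rw [sub_lie, lie_sub, lie_sub, smul_lie, lie_smul, lie_smul, hZlie b, hZlie' a]
          simp
        rw [h1]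
        refine hT _ _ ?_ ?_ <;>
          rw [map_sub, map_smul, smul_eq_mul, hZφ, mul_one, sub_self]
      -- contradiction via positivity
      set ψ : g →ₗ[ℝ] ℝ := -(φ ∘ₗ (LieAlgebra.ad ℝ g η)) with hψ
      have hψapp : ∀ u, ψ u = φ ⁅u, η⁆ := by
        intro u
        show -(φ ⁅η, u⁆) = φ ⁅u, η⁆
        rw [← lie_skew, map_neg, neg_neg]
      have h1 : LieModule.lowerCentralSeries ℝ g g 1 = ⁅(⊤ : LieIdeal ℝ g), (⊤ : LieIdeal ℝ g)⁆ := by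
        rw [LieModule.lowerCentralSeries_succ, LieModule.lowerCentralSeries_zero]
      have h2 : LieSubmodule.toSubmodule ⁅(⊤ : LieIdeal ℝ g), (⊤ : LieIdeal ℝ g)⁆ ≤
          LinearMap.ker ψ := by
        rw [LieSubmodule.lieIdeal_oper_eq_linear_span', Submodule.span_le]
        rintro u ⟨x, -, n, -, rfl⟩
        rw [SetLike.mem_coe, LinearMap.mem_ker, hψapp]
        exact hTall x n
      have hw1 : w ∈ LieModule.lowerCentralSeries ℝ g g 1 :=
        LieModule.antitone_lowerCentralSeries ℝ g g (show 1 ≤ n₀ - 1 by omega) hw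
      rw [h1] at hw1
      have hψw0 : ψ w = 0 :=
        LinearMap.mem_ker.mp (h2 ((LieSubmodule.mem_toSubmodule _).mpr hw1))
      have hψw : φ ⁅w, η⁆ = 0 := by rw [← hψapp]; exact hψw0
      have hwη : ⁅w, η⁆ = ⁅ζ, η⁆ := by
        have : ⁅ζ, η⁆ = ⁅w, η⁆ - φ w • ⁅Z, η⁆ := by rw [hζ, sub_lie, smul_lie]
        rw [this, hZlie, smul_zero, sub_zero]
      rw [hwη] at hψw
      have hpos := hJ4 ζ hζφ hζne
      rw [← hη] at hpos
      rw [hψw] at hpos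
      exact lt_irrefl 0 hpos
    have hbr : ∀ x y : g, ⁅x, y⁆ ∈ LieAlgebra.center ℝ g := by
      intro x y
      apply hlcs
      have h1 : LieModule.lowerCentralSeries ℝ g g 1 = ⁅(⊤ : LieIdeal ℝ g), (⊤ : LieIdeal ℝ g)⁆ := by
        rw [LieModule.lowerCentralSeries_succ, LieModule.lowerCentralSeries_zero]
      rw [h1]
      exact LieSubmodule.lie_mem_lie (LieSubmodule.mem_top x) (LieSubmodule.mem_top y)
    refine ⟨hbr, ?_⟩
    -- apply the Darboux construction to W = ker φ
    obtain ⟨k, e, heW, he1, he2, hespan⟩ := stmt5_darboux g φ J hJ1 hJ2 hJ3 hJ4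
      (Module.finrank ℝ (LinearMap.ker φ)) (LinearMap.ker φ) le_rfl
      (fun x hx => LinearMap.mem_ker.mpr (hJ1 x (LinearMap.mem_ker.mp hx))) le_rfl
    have heφ : ∀ i, φ (e i) = 0 := fun i => LinearMap.mem_ker.mp (heW i)
    have heJφ : ∀ i, φ (J (e i)) = 0 := fun i => hJ1 _ (heφ i)
    -- the candidate family over Fin k ⊕ Fin k ⊕ Unit
    set v : Fin k ⊕ Fin k ⊕ Unit → g :=
      Sum.elim e (Sum.elim (fun i => J (e i)) (fun _ => -Z)) with hv
    -- linear independence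
    have hsum0 : ∀ c : (Fin k ⊕ Fin k ⊕ Unit) → ℝ,
        (∑ i, c i • v i) = 0 → ∀ ℓ : g →ₗ[ℝ] ℝ,
        (∑ i : Fin k, c (Sum.inl i) * ℓ (e i)) +
        ((∑ i : Fin k, c (Sum.inr (Sum.inl i)) * ℓ (J (e i))) +
          c (Sum.inr (Sum.inr ())) * ℓ (-Z)) = 0 := by
      intro c hc ℓ
      have h0 := congrArg ℓ hc
      rw [map_sum, map_zero] at h0
      simp only [map_smul, smul_eq_mul] at h0
      rw [Fintype.sum_sum_type, Fintype.sum_sum_type] at h0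
      simpa [hv] using h0
    have hind : LinearIndependent ℝ v := by
      rw [Fintype.linearIndependent_iff]
      intro c hc
      have hZ0 : c (Sum.inr (Sum.inr ())) = 0 := by
        have h := hsum0 c hc φ
        simp only [heφ, heJφ, mul_zero, Finset.sum_const_zero, map_neg, hZφ, zero_add,
          add_zero] at h
        linarith
      have hinl : ∀ j : Fin k, c (Sum.inl j) = 0 := by
        intro j
        have h := hsum0 c hc (φ ∘ₗ (LieAlgebra.ad ℝ g (e j)) ∘ₗ J)
        have hval1 : ∀ i, φ ⁅e j, J (e i)⁆ = if j = i then 1 else 0 := fun i => he1 j i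
        have hval2 : ∀ i, φ ⁅e j, J (J (e i))⁆ = 0 := by
          intro i
          rw [hJ2 _ (heφ i), lie_neg, map_neg, he2 j i, neg_zero]
        simp only [LinearMap.coe_comp, Function.comp_apply, LieAlgebra.ad_apply] at h
        rw [hZ0] at h
        simp only [hval1, hval2, mul_zero, Finset.sum_const_zero, zero_mul, add_zero,
          mul_ite, mul_one] at h
        rwa [Finset.sum_ite_eq Finset.univ j (fun i => c (Sum.inl i)),
          if_pos (Finset.mem_univ j)] at h
      have hinr : ∀ j : Fin k, c (Sum.inr (Sum.inl j)) = 0 := by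
        intro j
        have h := hsum0 c hc (φ ∘ₗ (LieAlgebra.ad ℝ g (J (e j))) ∘ₗ J)
        have hval1 : ∀ i, φ ⁅J (e j), J (e i)⁆ = 0 := by
          intro i
          rw [hJ3 _ _ (heφ j) (heφ i)]
          exact he2 j i
        have hval2 : ∀ i, φ ⁅J (e j), J (J (e i))⁆ = if j = i then 1 else 0 := by
          intro i
          rw [hJ2 _ (heφ i), lie_neg, map_neg, ← lie_skew, map_neg, neg_neg, he1 i j]
          by_cases hij : i = j
          · simp [hij]
          · simp [hij, Ne.symm hij]
        simp only [LinearMap.coe_comp, Function.comp_apply, LieAlgebra.ad_apply] at h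
        rw [hZ0] at h
        simp only [hval1, hval2, mul_zero, Finset.sum_const_zero, zero_mul, add_zero,
          zero_add, mul_ite, mul_one] at h
        rwa [Finset.sum_ite_eq Finset.univ j (fun i => c (Sum.inr (Sum.inl i))),
          if_pos (Finset.mem_univ j)] at h
      intro i
      rcases i with i | i | i
      · exact hinl i
      · exact hinr i
      · exact hZ0
    -- spanning
    have hspan : Submodule.span ℝ (Set.range v) = ⊤ := by
      rw [eq_top_iff]
      intro x _
      have hx1 : x - φ x • Z ∈ LinearMap.ker φ := by
        rw [LinearMap.mem_ker, map_sub, map_smul, smul_eq_mul, hZφ, mul_one, sub_self]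
      have hsub : Submodule.span ℝ (Set.range e ∪ Set.range (fun i => J (e i))) ≤
          Submodule.span ℝ (Set.range v) := by
        apply Submodule.span_mono
        rintro u (⟨i, rfl⟩ | ⟨i, rfl⟩)
        · exact ⟨Sum.inl i, rfl⟩
        · exact ⟨Sum.inr (Sum.inl i), rfl⟩
      have h1 : x - φ x • Z ∈ Submodule.span ℝ (Set.range v) := hsub (hespan hx1)
      have hZmem : Z ∈ Submodule.span ℝ (Set.range v) := by
        have : -Z ∈ Submodule.span ℝ (Set.range v) :=
          Submodule.subset_span ⟨Sum.inr (Sum.inr ()), rfl⟩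
        simpa using Submodule.neg_mem _ this
      have : x = (x - φ x • Z) + φ x • Z := by abel
      rw [this]
      exact Submodule.add_mem _ h1 (Submodule.smul_mem _ _ hZmem)
    -- k = m
    have hcard : Fintype.card (Fin k ⊕ Fin k ⊕ Unit) = 2 * k + 1 := by
      simp [Fintype.card_sum]
      omega
    have hle1 : 2 * k + 1 ≤ 2 * m + 1 := by
      have := hind.fintype_card_le_finrank
      rwa [hcard, hdim] at this
    have hle2 : 2 * m + 1 ≤ 2 * k + 1 := by
      have := finrank_le_of_span_eq_top hspan
      rwa [hcard, hdim] at this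
    have hkm : k = m := by omega
    subst hkm
    -- build the basis
    have hspan' : ⊤ ≤ Submodule.span ℝ (Set.range v) := hspan.ge
    refine ⟨Module.Basis.mk hind hspan', ?_, ?_, ?_, ?_⟩ <;>
      simp only [Module.Basis.coe_mk]
    · intro i j
      have h1 : ⁅e i, J (e j)⁆ = φ ⁅e i, J (e j)⁆ • Z := hZrep _ (hbr _ _)
      show ⁅e i, J (e j)⁆ = if i = j then -(-Z) else 0
      rw [h1, he1 i j]
      by_cases hij : i = j <;> simp [hij]
    · intro i j
      have h1 : ⁅e i, e j⁆ = φ ⁅e i, e j⁆ • Z := hZrep _ (hbr _ _)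
      show ⁅e i, e j⁆ = 0
      rw [h1, he2 i j, zero_smul]
    · intro i j
      have h1 : ⁅J (e i), J (e j)⁆ = φ ⁅J (e i), J (e j)⁆ • Z := hZrep _ (hbr _ _)
      show ⁅J (e i), J (e j)⁆ = 0
      rw [h1, hJ3 _ _ (heφ i) (heφ j), he2 i j, zero_smul]
    · intro x
      show ⁅-Z, x⁆ = 0
      rw [neg_lie, hZlie x, neg_zero]
end

section
/- Let h = h_{2m+1} be the Heisenberg Lie algebra with basis {X_1,...,X_m, Y_1,...,Y_m, Z}, [X_i,Y_i] = -Z, and let t = span{U} act by ad_U(X_i) = X_i, ad_U(Y_i) = Y_i, ad_U(Z) = 2Z. If τ: h → t is a Lie algebra homomorphism with τ ≠ 0, then ker τ is a codimension-one ideal of h containing Z, ker τ ≅ R ⊕ h_{2m-1}, and the modification h(τ) is isomorphic to the semidirect product (R ⊕ h_{2m-1}) ⋊ R with diagonal R-action. -/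
/-- The Heisenberg Lie algebra `h_{2m+1}`: `(a, b, c)` stands for
`Σ a_i X_i + Σ b_i Y_i + c Z`, with only nonzero brackets `[X_i, Y_i] = -Z`. -/
def hbr (m : ℕ) (v w : (Fin m → ℝ) × (Fin m → ℝ) × ℝ) : (Fin m → ℝ) × (Fin m → ℝ) × ℝ :=
  (0, 0, -(∑ i, (v.1 i * w.2.1 i - v.2.1 i * w.1 i)))

/-- The derivation `ad_U` of `h_{2m+1}`: `ad_U(X_i) = X_i`, `ad_U(Y_i) = Y_i`,
`ad_U(Z) = 2Z`. -/
def adU (m : ℕ) (v : (Fin m → ℝ) × (Fin m → ℝ) × ℝ) : (Fin m → ℝ) × (Fin m → ℝ) × ℝ :=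
  (v.1, v.2.1, 2 * v.2.2)

/-- The modified bracket `[A,B]_τ = [A,B] + ad_{τ(A)·U}(B) - ad_{τ(B)·U}(A)`. -/
def hbrτ (m : ℕ) (τ : ((Fin m → ℝ) × (Fin m → ℝ) × ℝ) →ₗ[ℝ] ℝ)
    (v w : (Fin m → ℝ) × (Fin m → ℝ) × ℝ) : (Fin m → ℝ) × (Fin m → ℝ) × ℝ :=
  hbr m v w + τ v • adU m w - τ w • adU m v

/-- The bracket of `ℝ ⊕ h_{2m-1}` (an element is `(s, h)` with `h` in the Heisenberg
algebra `h_{2(m-1)+1}` and `s` in the abelian `ℝ`-factor). -/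
def rhbr (m : ℕ) (v w : ℝ × ((Fin (m - 1) → ℝ) × (Fin (m - 1) → ℝ) × ℝ)) :
    ℝ × ((Fin (m - 1) → ℝ) × (Fin (m - 1) → ℝ) × ℝ) :=
  (0, hbr (m - 1) v.2 w.2)

/-- The bracket of the semidirect product `(ℝ ⊕ h_{2m-1}) ⋊ ℝ` with diagonal action of
the generator `T` of the `ℝ`-factor: `ad_T = 1` on the `ℝ`-summand and on the `X_i, Y_i`,
and `ad_T(Z) = 2Z`. An element is `((s, h), t)`. -/
def sdbr (m : ℕ) (v w : (ℝ × ((Fin (m - 1) → ℝ) × (Fin (m - 1) → ℝ) × ℝ)) × ℝ) :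
    (ℝ × ((Fin (m - 1) → ℝ) × (Fin (m - 1) → ℝ) × ℝ)) × ℝ :=
  (rhbr m v.1 w.1 + v.2 • (w.1.1, w.1.2.1, w.1.2.2.1, 2 * w.1.2.2.2)
      - w.2 • (v.1.1, v.1.2.1, v.1.2.2.1, 2 * v.1.2.2.2), 0)

namespace S16

def dot {n : ℕ} (x y : Fin n → ℝ) : ℝ := ∑ i, x i * y i

lemma dot_comm {n} (x y : Fin n → ℝ) : dot x y = dot y x := by
  simp [dot, mul_comm]

lemma dot_add_left {n} (x x' y : Fin n → ℝ) : dot (x + x') y = dot x y + dot x' y := by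
  simp [dot, add_mul, Finset.sum_add_distrib]

lemma dot_add_right {n} (x y y' : Fin n → ℝ) : dot x (y + y') = dot x y + dot x y' := by
  simp [dot, mul_add, Finset.sum_add_distrib]

lemma dot_smul_left {n} (c : ℝ) (x y : Fin n → ℝ) : dot (c • x) y = c * dot x y := by
  simp [dot, Finset.mul_sum, mul_assoc]

lemma dot_smul_right {n} (c : ℝ) (x y : Fin n → ℝ) : dot x (c • y) = c * dot x y := by
  simp [dot, Finset.mul_sum]; apply Finset.sum_congr rfl; intros; ring

lemma dot_zero_left {n} (y : Fin n → ℝ) : dot 0 y = 0 := by simp [dot]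
lemma dot_zero_right {n} (x : Fin n → ℝ) : dot x 0 = 0 := by simp [dot]
lemma dot_neg_left {n} (x y : Fin n → ℝ) : dot (-x) y = -dot x y := by
  simp [dot, Finset.sum_neg_distrib]
lemma dot_neg_right {n} (x y : Fin n → ℝ) : dot x (-y) = -dot x y := by
  simp [dot, Finset.sum_neg_distrib]
lemma dot_sub_left {n} (x x' y : Fin n → ℝ) : dot (x - x') y = dot x y - dot x' y := by
  simp [dot, sub_mul, Finset.sum_sub_distrib]

lemma dot_succ {k} (x y : Fin (k+1) → ℝ) :
    dot x y = x 0 * y 0 + ∑ i : Fin k, x i.succ * y i.succ := by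
  simp [dot, Fin.sum_univ_succ]

lemma dot_single_right {n} (x : Fin n → ℝ) (j : Fin n) : dot x (Pi.single j 1) = x j := by
  simp [dot, Pi.single_apply]

lemma dot_single_left {n} (x : Fin n → ℝ) (j : Fin n) : dot (Pi.single j 1) x = x j := by
  rw [dot_comm]; exact dot_single_right x j

def ome {n : ℕ} (v w : (Fin n → ℝ) × (Fin n → ℝ)) : ℝ := dot v.1 w.2 - dot v.2 w.1

def Sympl {n : ℕ} (S : ((Fin n → ℝ) × (Fin n → ℝ)) ≃ₗ[ℝ] ((Fin n → ℝ) × (Fin n → ℝ))) : Prop :=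
  ∀ v w, ome (S v) (S w) = ome v w

lemma Sympl.trans {n} {S T : ((Fin n → ℝ) × (Fin n → ℝ)) ≃ₗ[ℝ] ((Fin n → ℝ) × (Fin n → ℝ))}
    (hS : Sympl S) (hT : Sympl T) : Sympl (S.trans T) := fun v w => by
  simp only [LinearEquiv.trans_apply]; rw [hT, hS]

-- helpers to build linear maps / equivs
def mkL {M N : Type*} [AddCommGroup M] [Module ℝ M] [AddCommGroup N] [Module ℝ N]
    (f : M → N) (h1 : ∀ x y, f (x + y) = f x + f y)
    (h2 : ∀ (c : ℝ) x, f (c • x) = c • f x) : M →ₗ[ℝ] N :=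
  ⟨⟨f, h1⟩, h2⟩

@[simp] lemma mkL_apply {M N : Type*} [AddCommGroup M] [Module ℝ M] [AddCommGroup N]
    [Module ℝ N] (f : M → N) (h1) (h2) (x : M) : mkL f h1 h2 x = f x := rfl

noncomputable def mkE {M N : Type*} [AddCommGroup M] [Module ℝ M] [AddCommGroup N]
    [Module ℝ N] (f : M →ₗ[ℝ] N) (g : N →ₗ[ℝ] M)
    (h1 : ∀ v, g (f v) = v) (h2 : ∀ v, f (g v) = v) : M ≃ₗ[ℝ] N :=
  LinearEquiv.ofLinear f g (LinearMap.ext h2) (LinearMap.ext h1)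

@[simp] lemma mkE_apply {M N : Type*} [AddCommGroup M] [Module ℝ M] [AddCommGroup N]
    [Module ℝ N] (f : M →ₗ[ℝ] N) (g : N →ₗ[ℝ] M)
    (h1) (h2) (x : M) : mkE f g h1 h2 x = f x := rfl

@[simp] lemma mkE_symm_apply {M N : Type*} [AddCommGroup M] [Module ℝ M] [AddCommGroup N]
    [Module ℝ N] (f : M →ₗ[ℝ] N) (g : N →ₗ[ℝ] M)
    (h1) (h2) (x : N) : (mkE f g h1 h2).symm x = g x := rfl

variable {n : ℕ}

-- the map J : (a,b) ↦ (b, -a)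
noncomputable def Jmap (n : ℕ) : ((Fin n → ℝ) × (Fin n → ℝ)) ≃ₗ[ℝ] ((Fin n → ℝ) × (Fin n → ℝ)) :=
  mkE (mkL (fun p => (p.2, -p.1)) (by intros; simp [Prod.ext_iff]; abel)
        (by intros; simp [Prod.ext_iff]))
      (mkL (fun p => (-p.2, p.1)) (by intros; simp [Prod.ext_iff]; abel)
        (by intros; simp [Prod.ext_iff]))
      (by intro v; simp) (by intro v; simp)

@[simp] lemma Jmap_apply (p : (Fin n → ℝ) × (Fin n → ℝ)) : Jmap n p = (p.2, -p.1) := rfl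

lemma sympl_J : Sympl (Jmap n) := by
  intro v w
  simp [ome, dot_neg_left, dot_neg_right]
  try ring

-- shear1 C : (a,b) ↦ (a + C b, b), C symmetric
noncomputable def shear1 (C : (Fin n → ℝ) →ₗ[ℝ] (Fin n → ℝ)) :
    ((Fin n → ℝ) × (Fin n → ℝ)) ≃ₗ[ℝ] ((Fin n → ℝ) × (Fin n → ℝ)) :=
  mkE (mkL (fun p => (p.1 + C p.2, p.2)) (by intros; simp [Prod.ext_iff]; abel)
        (by intros; simp [Prod.ext_iff]))
      (mkL (fun p => (p.1 - C p.2, p.2)) (by intros; simp [Prod.ext_iff]; abel)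
        (by intros; simp [Prod.ext_iff, smul_sub]))
      (by intro v; simp) (by intro v; simp)

@[simp] lemma shear1_apply (C) (p : (Fin n → ℝ) × (Fin n → ℝ)) :
    shear1 C p = (p.1 + C p.2, p.2) := rfl

lemma sympl_shear1 (C : (Fin n → ℝ) →ₗ[ℝ] (Fin n → ℝ))
    (hC : ∀ x y, dot (C x) y = dot x (C y)) : Sympl (shear1 C) := by
  intro v w
  simp [ome, dot_add_left, dot_add_right, hC]
  try ring

-- shear2 C : (a,b) ↦ (a, b + C a), C symmetric
noncomputable def shear2 (C : (Fin n → ℝ) →ₗ[ℝ] (Fin n → ℝ)) :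
    ((Fin n → ℝ) × (Fin n → ℝ)) ≃ₗ[ℝ] ((Fin n → ℝ) × (Fin n → ℝ)) :=
  mkE (mkL (fun p => (p.1, p.2 + C p.1)) (by intros; simp [Prod.ext_iff]; abel)
        (by intros; simp [Prod.ext_iff]))
      (mkL (fun p => (p.1, p.2 - C p.1)) (by intros; simp [Prod.ext_iff]; abel)
        (by intros; simp [Prod.ext_iff, smul_sub]))
      (by intro v; simp) (by intro v; simp)

@[simp] lemma shear2_apply (C) (p : (Fin n → ℝ) × (Fin n → ℝ)) :
    shear2 C p = (p.1, p.2 + C p.1) := rfl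

lemma sympl_shear2 (C : (Fin n → ℝ) →ₗ[ℝ] (Fin n → ℝ))
    (hC : ∀ x y, dot (C x) y = dot x (C y)) : Sympl (shear2 C) := by
  intro v w
  simp [ome, dot_add_left, dot_add_right, hC]
  try ring


-- coefficient representation of a functional
noncomputable def acoef (φ : ((Fin n → ℝ) × (Fin n → ℝ)) →ₗ[ℝ] ℝ) : Fin n → ℝ :=
  fun i => φ (Pi.single i 1, 0)
noncomputable def bcoef (φ : ((Fin n → ℝ) × (Fin n → ℝ)) →ₗ[ℝ] ℝ) : Fin n → ℝ :=
  fun i => φ (0, Pi.single i 1)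

lemma rep (φ : ((Fin n → ℝ) × (Fin n → ℝ)) →ₗ[ℝ] ℝ) (x y : Fin n → ℝ) :
    φ (x, y) = dot x (acoef φ) + dot y (bcoef φ) := by
  have hx : (x, y) = (∑ j, x j • ((Pi.single j 1 : Fin n → ℝ), (0 : Fin n → ℝ)))
      + ∑ j, y j • ((0 : Fin n → ℝ), (Pi.single j 1 : Fin n → ℝ)) := by
    rw [Prod.ext_iff]
    constructor
    · show x = _
      funext i
      simp [Prod.fst_sum, Finset.sum_apply, Pi.single_apply, mul_ite, Finset.sum_ite_eq']
    · show y = _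
      funext i
      simp [Prod.snd_sum, Finset.sum_apply, Pi.single_apply, mul_ite, Finset.sum_ite_eq']
  rw [hx, map_add, map_sum, map_sum]
  simp only [map_smul, smul_eq_mul]
  rfl

variable {k : ℕ}

-- the GL-part: given γ 0 ≠ 0, maps pairing-dually so that ⟨γ, A a⟩ = a 0
noncomputable def Afun (γ : Fin (k+1) → ℝ) (a : Fin (k+1) → ℝ) : Fin (k+1) → ℝ :=
  fun i => if i = 0 then (a 0 - dot γ a + γ 0 * a 0) / γ 0 else a i
noncomputable def Ainvfun (γ : Fin (k+1) → ℝ) (c : Fin (k+1) → ℝ) : Fin (k+1) → ℝ :=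
  fun i => if i = 0 then dot γ c else c i
def Bfun (γ : Fin (k+1) → ℝ) (b : Fin (k+1) → ℝ) : Fin (k+1) → ℝ :=
  fun i => b 0 * γ i + (if i = 0 then 0 else b i)
noncomputable def Binvfun (γ : Fin (k+1) → ℝ) (d : Fin (k+1) → ℝ) : Fin (k+1) → ℝ :=
  fun i => if i = 0 then d 0 / γ 0 else d i - γ i * (d 0 / γ 0)

lemma dot_Afun (γ : Fin (k+1) → ℝ) (hγ : γ 0 ≠ 0) (a : Fin (k+1) → ℝ) :
    dot γ (Afun γ a) = a 0 := by
  rw [dot_succ]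
  simp only [Afun, if_pos rfl, Fin.succ_ne_zero, if_false, ↓reduceIte]
  rw [dot_succ]
  field_simp
  ring

lemma Ainv_Afun (γ : Fin (k+1) → ℝ) (hγ : γ 0 ≠ 0) (a : Fin (k+1) → ℝ) :
    Ainvfun γ (Afun γ a) = a := by
  funext i
  by_cases hi : i = 0
  · subst hi
    simp only [Ainvfun, if_pos rfl]
    exact dot_Afun γ hγ a
  · simp [Ainvfun, Afun, hi]

lemma Afun_Ainv (γ : Fin (k+1) → ℝ) (hγ : γ 0 ≠ 0) (c : Fin (k+1) → ℝ) :
    Afun γ (Ainvfun γ c) = c := by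
  funext i
  by_cases hi : i = 0
  · subst hi
    simp only [Afun, Ainvfun, dot_succ, if_pos rfl, Fin.succ_ne_zero, if_false, ↓reduceIte]
    field_simp
    try ring
  · simp [Afun, Ainvfun, hi]

lemma Binv_Bfun (γ : Fin (k+1) → ℝ) (hγ : γ 0 ≠ 0) (b : Fin (k+1) → ℝ) :
    Binvfun γ (Bfun γ b) = b := by
  funext i
  by_cases hi : i = 0
  · subst hi
    simp only [Binvfun, Bfun, if_pos rfl, ↓reduceIte, add_zero]
    field_simp
  · simp only [Binvfun, Bfun, hi, if_false, if_pos rfl, ↓reduceIte]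
    field_simp
    ring

lemma Bfun_Binv (γ : Fin (k+1) → ℝ) (hγ : γ 0 ≠ 0) (d : Fin (k+1) → ℝ) :
    Bfun γ (Binvfun γ d) = d := by
  funext i
  by_cases hi : i = 0
  · subst hi
    simp only [Binvfun, Bfun, if_pos rfl, ↓reduceIte, add_zero]
    field_simp
  · simp only [Binvfun, Bfun, hi, if_false, if_pos rfl, ↓reduceIte]
    field_simp
    ring

lemma dot_Afun_Bfun (γ : Fin (k+1) → ℝ) (hγ : γ 0 ≠ 0) (a b : Fin (k+1) → ℝ) :
    dot (Afun γ a) (Bfun γ b) = dot a b := by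
  rw [dot_succ, dot_succ]
  simp only [Afun, Bfun, if_pos rfl, Fin.succ_ne_zero, if_false, ↓reduceIte]
  have h1 : ∑ i : Fin k, a i.succ * (b 0 * γ i.succ + b i.succ)
      = b 0 * (∑ i : Fin k, γ i.succ * a i.succ) + ∑ i : Fin k, a i.succ * b i.succ := by
    rw [Finset.mul_sum, ← Finset.sum_add_distrib]
    apply Finset.sum_congr rfl; intros; ring
  rw [h1, dot_succ]
  field_simp
  ring

lemma dot_Bfun (γ β : Fin (k+1) → ℝ) (b : Fin (k+1) → ℝ) :
    dot (Bfun γ b) β = b 0 * dot γ β + ∑ i : Fin k, b i.succ * β i.succ := by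
  rw [dot_succ]
  simp only [Bfun, if_pos rfl, if_true, Fin.succ_ne_zero, if_false, add_zero]
  have h1 : ∑ i : Fin k, (b 0 * γ i.succ + b i.succ) * β i.succ
      = b 0 * (∑ i : Fin k, γ i.succ * β i.succ) + ∑ i : Fin k, b i.succ * β i.succ := by
    rw [Finset.mul_sum, ← Finset.sum_add_distrib]
    apply Finset.sum_congr rfl; intros; ring
  rw [h1, dot_succ]
  ring

lemma Afun_add (γ a a' : Fin (k+1) → ℝ) : Afun γ (a + a') = Afun γ a + Afun γ a' := by
  funext i
  by_cases hi : i = 0 <;> simp [Afun, hi, dot_add_right] <;> ring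

lemma Afun_smul (γ : Fin (k+1) → ℝ) (c : ℝ) (a : Fin (k+1) → ℝ) :
    Afun γ (c • a) = c • Afun γ a := by
  funext i
  by_cases hi : i = 0 <;> simp [Afun, hi, dot_smul_right, smul_eq_mul] <;> ring

lemma Bfun_add (γ b b' : Fin (k+1) → ℝ) : Bfun γ (b + b') = Bfun γ b + Bfun γ b' := by
  funext i
  by_cases hi : i = 0 <;> simp [Bfun, hi] <;> ring

lemma Bfun_smul (γ : Fin (k+1) → ℝ) (c : ℝ) (b : Fin (k+1) → ℝ) :
    Bfun γ (c • b) = c • Bfun γ b := by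
  funext i
  by_cases hi : i = 0 <;> simp [Bfun, hi, smul_eq_mul] <;> ring

lemma Ainv_add (γ a a' : Fin (k+1) → ℝ) : Ainvfun γ (a + a') = Ainvfun γ a + Ainvfun γ a' := by
  funext i
  by_cases hi : i = 0 <;> simp [Ainvfun, hi, dot_add_right]

lemma Ainv_smul (γ : Fin (k+1) → ℝ) (c : ℝ) (a : Fin (k+1) → ℝ) :
    Ainvfun γ (c • a) = c • Ainvfun γ a := by
  funext i
  by_cases hi : i = 0 <;> simp [Ainvfun, hi, dot_smul_right, smul_eq_mul]

lemma Binv_add (γ b b' : Fin (k+1) → ℝ) : Binvfun γ (b + b') = Binvfun γ b + Binvfun γ b' := by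
  funext i
  by_cases hi : i = 0 <;> simp [Binvfun, hi] <;> ring

lemma Binv_smul (γ : Fin (k+1) → ℝ) (c : ℝ) (b : Fin (k+1) → ℝ) :
    Binvfun γ (c • b) = c • Binvfun γ b := by
  funext i
  by_cases hi : i = 0 <;> simp [Binvfun, hi, smul_eq_mul] <;> ring

noncomputable def Gmap (γ : Fin (k+1) → ℝ) (hγ : γ 0 ≠ 0) :
    ((Fin (k+1) → ℝ) × (Fin (k+1) → ℝ)) ≃ₗ[ℝ] ((Fin (k+1) → ℝ) × (Fin (k+1) → ℝ)) :=
  mkE (mkL (fun p => (Afun γ p.1, Bfun γ p.2))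
        (by intro x y; simp [Prod.ext_iff, Afun_add, Bfun_add])
        (by intro c x; simp [Prod.ext_iff, Afun_smul, Bfun_smul]))
      (mkL (fun p => (Ainvfun γ p.1, Binvfun γ p.2))
        (by intro x y; simp [Prod.ext_iff, Ainv_add, Binv_add])
        (by intro c x; simp [Prod.ext_iff, Ainv_smul, Binv_smul]))
      (by intro v; simp [Prod.ext_iff, Ainv_Afun γ hγ, Binv_Bfun γ hγ])
      (by intro v; simp [Prod.ext_iff, Afun_Ainv γ hγ, Bfun_Binv γ hγ])


@[simp] lemma Gmap_apply (γ : Fin (k+1) → ℝ) (hγ : γ 0 ≠ 0)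
    (p : (Fin (k+1) → ℝ) × (Fin (k+1) → ℝ)) : Gmap γ hγ p = (Afun γ p.1, Bfun γ p.2) := rfl

lemma sympl_G (γ : Fin (k+1) → ℝ) (hγ : γ 0 ≠ 0) : Sympl (Gmap γ hγ) := by
  intro v w
  show dot (Afun γ v.1) (Bfun γ w.2) - dot (Bfun γ v.2) (Afun γ w.1) = _
  rw [dot_Afun_Bfun γ hγ, dot_comm (Bfun γ v.2), dot_Afun_Bfun γ hγ, dot_comm w.1 v.2]
  rfl

lemma good (φ : ((Fin (k+1) → ℝ) × (Fin (k+1) → ℝ)) →ₗ[ℝ] ℝ) (h : acoef φ 0 ≠ 0) :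
    ∃ S, Sympl S ∧ ∀ v, φ (S v) = v.1 0 := by
  set γ := acoef φ with hγdef
  set β := bcoef φ with hβdef
  set δ : Fin (k+1) → ℝ := fun i => if i = 0 then dot γ β else β i with hδdef
  have h1 : ∀ v, φ (Gmap γ h v) = v.1 0 + dot v.2 δ := by
    intro v
    rw [Gmap_apply, rep, dot_comm _ (acoef φ), ← hγdef, ← hβdef, dot_Afun γ h, dot_Bfun]
    rw [dot_succ (x := v.2) (y := δ)]
    simp only [hδdef, if_pos rfl, Fin.succ_ne_zero, if_false]
  -- kill δ with a shear
  have Cadd : ∀ b b' : Fin (k+1) → ℝ,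
      (δ 0 * (b + b') 0 - dot δ (b + b')) • (Pi.single 0 1 : Fin (k+1) → ℝ) - (b + b') 0 • δ
      = ((δ 0 * b 0 - dot δ b) • (Pi.single 0 1 : Fin (k+1) → ℝ) - b 0 • δ)
        + ((δ 0 * b' 0 - dot δ b') • (Pi.single 0 1 : Fin (k+1) → ℝ) - b' 0 • δ) := by
    intro b b'
    funext i
    simp [dot_add_right, Pi.single_apply]
    split_ifs <;> ring
  have Csmul : ∀ (c : ℝ) (b : Fin (k+1) → ℝ),
      (δ 0 * (c • b) 0 - dot δ (c • b)) • (Pi.single 0 1 : Fin (k+1) → ℝ) - (c • b) 0 • δ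
      = c • ((δ 0 * b 0 - dot δ b) • (Pi.single 0 1 : Fin (k+1) → ℝ) - b 0 • δ) := by
    intro c b
    funext i
    simp [dot_smul_right, Pi.single_apply, smul_eq_mul]
    split_ifs <;> ring
  set C : (Fin (k+1) → ℝ) →ₗ[ℝ] (Fin (k+1) → ℝ) :=
    mkL (fun b => (δ 0 * b 0 - dot δ b) • (Pi.single 0 1 : Fin (k+1) → ℝ) - b 0 • δ) Cadd Csmul with hCdef
  have hC : ∀ x y, dot (C x) y = dot x (C y) := by
    intro x y
    rw [hCdef, mkL_apply, mkL_apply, dot_comm x]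
    simp only [dot_sub_left, dot_smul_left, dot_single_left]
    ring
  have hC0 : ∀ b, C b 0 = -dot b δ := by
    intro b
    rw [hCdef, mkL_apply]
    simp [Pi.single_apply, dot_comm b δ]
    ring
  refine ⟨(shear1 C).trans (Gmap γ h), Sympl.trans (sympl_shear1 C hC) (sympl_G γ h), ?_⟩
  intro v
  rw [LinearEquiv.trans_apply, h1, shear1_apply]
  simp only [Pi.add_apply]
  rw [hC0]
  ring

lemma exists_coef_ne (φ : ((Fin (k+1) → ℝ) × (Fin (k+1) → ℝ)) →ₗ[ℝ] ℝ) (hφ : φ ≠ 0) :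
    ∃ j, acoef φ j ≠ 0 ∨ bcoef φ j ≠ 0 := by
  by_contra hc
  push_neg at hc
  apply hφ
  have ha : acoef φ = 0 := funext fun j => (hc j).1
  have hb : bcoef φ = 0 := funext fun j => (hc j).2
  refine LinearMap.ext fun v => ?_
  have h := rep φ v.1 v.2
  rw [Prod.mk.eta] at h
  rw [h, ha, hb, dot_zero_right, dot_zero_right]
  simp

lemma good2 (φ : ((Fin (k+1) → ℝ) × (Fin (k+1) → ℝ)) →ₗ[ℝ] ℝ) (j : Fin (k+1))
    (hj0 : j ≠ 0) (hbj : bcoef φ j ≠ 0) (h0 : acoef φ 0 = 0) :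
    ∃ S, Sympl S ∧ ∀ v, φ (S v) = v.1 0 := by
  have Cadd : ∀ x y : Fin (k+1) → ℝ,
      (x + y) j • (Pi.single 0 1 : Fin (k+1) → ℝ) + (x + y) 0 • (Pi.single j 1 : Fin (k+1) → ℝ)
      = (x j • (Pi.single 0 1 : Fin (k+1) → ℝ) + x 0 • (Pi.single j 1 : Fin (k+1) → ℝ))
        + (y j • (Pi.single 0 1 : Fin (k+1) → ℝ) + y 0 • (Pi.single j 1 : Fin (k+1) → ℝ)) := by
    intro x y
    funext i
    simp [Pi.single_apply]
    split_ifs <;> ring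
  have Csmul : ∀ (c : ℝ) (x : Fin (k+1) → ℝ),
      (c • x) j • (Pi.single 0 1 : Fin (k+1) → ℝ) + (c • x) 0 • (Pi.single j 1 : Fin (k+1) → ℝ)
      = c • (x j • (Pi.single 0 1 : Fin (k+1) → ℝ) + x 0 • (Pi.single j 1 : Fin (k+1) → ℝ)) := by
    intro c x
    funext i
    simp [Pi.single_apply, smul_eq_mul]
    split_ifs <;> ring
  set C : (Fin (k+1) → ℝ) →ₗ[ℝ] (Fin (k+1) → ℝ) :=
    mkL (fun x => x j • (Pi.single 0 1 : Fin (k+1) → ℝ) + x 0 • (Pi.single j 1 : Fin (k+1) → ℝ)) Cadd Csmul with hCdef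
  have hC : ∀ x y, dot (C x) y = dot x (C y) := by
    intro x y
    rw [hCdef, mkL_apply, mkL_apply, dot_comm x]
    simp only [dot_add_left, dot_smul_left, dot_single_left]
    ring
  set φ2 := φ.comp (shear2 C).toLinearMap with hφ2
  have ha2 : acoef φ2 0 ≠ 0 := by
    have : acoef φ2 0 = φ (Pi.single 0 1, C (Pi.single 0 1)) := by
      simp [acoef, hφ2]
    rw [this, hCdef, mkL_apply] at *
    have h01 : (Pi.single 0 1 : Fin (k+1) → ℝ) j = 0 := Pi.single_eq_of_ne hj0 1
    have h02 : (Pi.single 0 1 : Fin (k+1) → ℝ) 0 = 1 := Pi.single_eq_same 0 1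
    rw [h01, h02, zero_smul, zero_add, one_smul, rep, dot_single_left, dot_single_left]
    rw [h0, zero_add]
    exact hbj
  obtain ⟨S2, hS2, hS2v⟩ := good φ2 ha2
  refine ⟨S2.trans (shear2 C), Sympl.trans hS2 (sympl_shear2 C hC), ?_⟩
  intro v
  have := hS2v v
  rw [hφ2] at this
  simpa using this

lemma normalize (φ : ((Fin (k+1) → ℝ) × (Fin (k+1) → ℝ)) →ₗ[ℝ] ℝ) (hφ : φ ≠ 0) :
    ∃ S, Sympl S ∧ ∀ v, φ (S v) = v.1 0 := by
  by_cases h0 : acoef φ 0 ≠ 0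
  · exact good φ h0
  push_neg at h0
  by_cases hb0 : bcoef φ 0 ≠ 0
  · set φ1 := φ.comp (Jmap (k+1)).toLinearMap with hφ1
    have ha1 : acoef φ1 0 ≠ 0 := by
      have : acoef φ1 0 = φ ((0 : Fin (k+1) → ℝ), -Pi.single 0 1) := by
        simp [acoef, hφ1]
      rw [this]
      have : ((0 : Fin (k+1) → ℝ), -(Pi.single 0 1 : Fin (k+1) → ℝ))
          = -((0 : Fin (k+1) → ℝ), (Pi.single 0 1 : Fin (k+1) → ℝ)) := by
        simp [Prod.ext_iff]
      rw [this, map_neg]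
      simpa [bcoef] using hb0
    obtain ⟨S, hS, hSv⟩ := good φ1 ha1
    refine ⟨S.trans (Jmap (k+1)), Sympl.trans hS sympl_J, ?_⟩
    intro v
    have := hSv v
    rw [hφ1] at this
    simpa using this
  push_neg at hb0
  obtain ⟨j, hj⟩ := exists_coef_ne φ hφ
  have hj0 : j ≠ 0 := by
    rintro rfl
    rcases hj with h | h
    · exact h h0
    · exact h hb0
  rcases hj with h | h
  · -- acoef φ j ≠ 0 : use J first
    set φ1 := φ.comp (Jmap (k+1)).toLinearMap with hφ1
    have hb1 : bcoef φ1 j ≠ 0 := by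
      have : bcoef φ1 j = φ (Pi.single j 1, -(0 : Fin (k+1) → ℝ)) := by
        simp [bcoef, hφ1]
      rw [this, neg_zero]
      exact h
    have ha1 : acoef φ1 0 = 0 := by
      have : acoef φ1 0 = φ ((0 : Fin (k+1) → ℝ), -Pi.single 0 1) := by
        simp [acoef, hφ1]
      rw [this]
      have h2 : ((0 : Fin (k+1) → ℝ), -(Pi.single 0 1 : Fin (k+1) → ℝ))
          = -((0 : Fin (k+1) → ℝ), (Pi.single 0 1 : Fin (k+1) → ℝ)) := by
        simp [Prod.ext_iff]
      rw [h2, map_neg]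
      simpa [bcoef] using hb0
    obtain ⟨S, hS, hSv⟩ := good2 φ1 j hj0 hb1 ha1
    refine ⟨S.trans (Jmap (k+1)), Sympl.trans hS sympl_J, ?_⟩
    intro v
    have := hSv v
    rw [hφ1] at this
    simpa using this
  · exact good2 φ j hj0 h h0


lemma hbr_ome {n : ℕ} (v w : (Fin n → ℝ) × (Fin n → ℝ) × ℝ) :
    hbr n v w = (0, 0, -ome (v.1, v.2.1) (w.1, w.2.1)) := by
  simp [hbr, ome, dot, Finset.sum_sub_distrib]

-- extend a symplectic map on pairs to the Heisenberg space, fixing the Z-coordinate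
noncomputable def Phi
    (S : ((Fin (k+1) → ℝ) × (Fin (k+1) → ℝ)) ≃ₗ[ℝ] ((Fin (k+1) → ℝ) × (Fin (k+1) → ℝ))) :
    ((Fin (k+1) → ℝ) × (Fin (k+1) → ℝ) × ℝ) ≃ₗ[ℝ] ((Fin (k+1) → ℝ) × (Fin (k+1) → ℝ) × ℝ) :=
  (LinearEquiv.prodAssoc ℝ (Fin (k+1) → ℝ) (Fin (k+1) → ℝ) ℝ).symm.trans
    ((S.prodCongr (LinearEquiv.refl ℝ ℝ)).trans
      (LinearEquiv.prodAssoc ℝ (Fin (k+1) → ℝ) (Fin (k+1) → ℝ) ℝ))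

variable {S : ((Fin (k+1) → ℝ) × (Fin (k+1) → ℝ)) ≃ₗ[ℝ] ((Fin (k+1) → ℝ) × (Fin (k+1) → ℝ))}

lemma Phi_apply (v : (Fin (k+1) → ℝ) × (Fin (k+1) → ℝ) × ℝ) :
    Phi S v = ((S (v.1, v.2.1)).1, (S (v.1, v.2.1)).2, v.2.2) := rfl

lemma Phi_symm_apply (v : (Fin (k+1) → ℝ) × (Fin (k+1) → ℝ) × ℝ) :
    (Phi S).symm v = ((S.symm (v.1, v.2.1)).1, (S.symm (v.1, v.2.1)).2, v.2.2) := rfl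

lemma Phi_Z (c : ℝ) : Phi S ((0 : Fin (k+1) → ℝ), (0 : Fin (k+1) → ℝ), c) = (0, 0, c) := by
  rw [Phi_apply]
  have h : ((0 : Fin (k+1) → ℝ), (0 : Fin (k+1) → ℝ)) = (0 : (Fin (k+1) → ℝ) × (Fin (k+1) → ℝ)) := rfl
  simp only [h, map_zero]
  rfl

lemma hbr_Phi (hS : Sympl S) (v w : (Fin (k+1) → ℝ) × (Fin (k+1) → ℝ) × ℝ) :
    hbr (k+1) (Phi S v) (Phi S w) = Phi S (hbr (k+1) v w) := by
  rw [hbr_ome, hbr_ome, Phi_Z, Phi_apply, Phi_apply]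
  have h1 : (((S (v.1, v.2.1)).1, (S (v.1, v.2.1)).2, v.2.2).1,
      ((S (v.1, v.2.1)).1, (S (v.1, v.2.1)).2, v.2.2).2.1) = S (v.1, v.2.1) := rfl
  have h2 : (((S (w.1, w.2.1)).1, (S (w.1, w.2.1)).2, w.2.2).1,
      ((S (w.1, w.2.1)).1, (S (w.1, w.2.1)).2, w.2.2).2.1) = S (w.1, w.2.1) := rfl
  rw [h1, h2, hS]

lemma adU_Phi (v : (Fin (k+1) → ℝ) × (Fin (k+1) → ℝ) × ℝ) :
    adU (k+1) (Phi S v) = Phi S (adU (k+1) v) := rfl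

-- cons / tail helpers (non-dependent versions)
def consR (x : ℝ) (a : Fin k → ℝ) : Fin (k+1) → ℝ := Fin.cons x a
def tailR (a : Fin (k+1) → ℝ) : Fin k → ℝ := Fin.tail a

@[simp] lemma consR_zero (x : ℝ) (a : Fin k → ℝ) : consR x a 0 = x := rfl
@[simp] lemma consR_succ (x : ℝ) (a : Fin k → ℝ) (i : Fin k) : consR x a i.succ = a i := by
  simp [consR]
@[simp] lemma tailR_apply (a : Fin (k+1) → ℝ) (i : Fin k) : tailR a i = a i.succ := rfl
@[simp] lemma tailR_consR (x : ℝ) (a : Fin k → ℝ) : tailR (consR x a) = a := by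
  funext i; simp [consR, tailR, Fin.tail]
lemma consR_self_tail (a : Fin (k+1) → ℝ) : consR (a 0) (tailR a) = a := by
  unfold consR tailR; exact Fin.cons_self_tail a

lemma cons_add (x y : ℝ) (a b : Fin k → ℝ) :
    consR (x + y) (a + b) = consR x a + consR y b := by
  funext i
  cases i using Fin.cases <;> simp

lemma cons_smul (c x : ℝ) (a : Fin k → ℝ) :
    consR (c * x) (c • a) = c • consR x a := by
  funext i
  cases i using Fin.cases <;> simp

lemma cons_zero_zero : consR 0 (0 : Fin k → ℝ) = 0 := by
  funext i
  cases i using Fin.cases <;> simp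

lemma tail_add (a b : Fin (k+1) → ℝ) : tailR (a + b) = tailR a + tailR b := rfl
lemma tail_smul (c : ℝ) (a : Fin (k+1) → ℝ) : tailR (c • a) = c • tailR a := rfl

-- the standard model isomorphism f_std
noncomputable def fstd (k : ℕ) :
    ((Fin (k+1) → ℝ) × (Fin (k+1) → ℝ) × ℝ) ≃ₗ[ℝ]
      ((ℝ × ((Fin k → ℝ) × (Fin k → ℝ) × ℝ)) × ℝ) :=
  mkE (mkL (fun v => ((v.2.1 0, (tailR v.1, tailR v.2.1, v.2.2 - v.2.1 0)), v.1 0))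
        (by intro x y
            refine Prod.ext (Prod.ext rfl (Prod.ext rfl (Prod.ext rfl ?_))) rfl
            show (x.2.2 + y.2.2) - (x.2.1 0 + y.2.1 0) = _
            simp [Prod.fst_add, Prod.snd_add]
            ring)
        (by intro c x
            refine Prod.ext (Prod.ext rfl (Prod.ext rfl (Prod.ext rfl ?_))) rfl
            show (c * x.2.2) - (c * x.2.1 0) = c * (x.2.2 - x.2.1 0)
            ring))
      (mkL (fun p => (consR p.2 p.1.2.1, consR p.1.1 p.1.2.2.1, p.1.2.2.2 + p.1.1))
        (by intro x y
            refine Prod.ext ?_ (Prod.ext ?_ ?_)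
            · exact cons_add _ _ _ _
            · exact cons_add _ _ _ _
            · show (x.1.2.2.2 + y.1.2.2.2) + (x.1.1 + y.1.1) = _
              simp [Prod.fst_add, Prod.snd_add]
              ring)
        (by intro c x
            refine Prod.ext ?_ (Prod.ext ?_ ?_)
            · exact cons_smul _ _ _
            · exact cons_smul _ _ _
            · show (c * x.1.2.2.2) + (c * x.1.1) = c * (x.1.2.2.2 + x.1.1)
              ring))
      (by intro v
          simp only [mkL_apply]
          refine Prod.ext ?_ (Prod.ext ?_ ?_)
          · exact consR_self_tail v.1
          · exact consR_self_tail v.2.1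
          · show (v.2.2 - v.2.1 0) + v.2.1 0 = v.2.2
            ring)
      (by intro p
          simp only [mkL_apply]
          refine Prod.ext (Prod.ext ?_ (Prod.ext ?_ (Prod.ext ?_ ?_))) ?_ <;> simp)


lemma fstd_apply (v : (Fin (k+1) → ℝ) × (Fin (k+1) → ℝ) × ℝ) :
    fstd k v = ((v.2.1 0, (tailR v.1, tailR v.2.1, v.2.2 - v.2.1 0)), v.1 0) := rfl

lemma fstd_brτ (v w : (Fin (k+1) → ℝ) × (Fin (k+1) → ℝ) × ℝ) :
    fstd k (hbr (k+1) v w + v.1 0 • adU (k+1) w - w.1 0 • adU (k+1) v)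
      = sdbr (k+1) (fstd k v) (fstd k w) := by
  refine Prod.ext (Prod.ext ?_ (Prod.ext ?_ (Prod.ext ?_ ?_))) ?_
  · simp [fstd_apply, sdbr, rhbr, hbr, adU, Prod.fst_add, Prod.snd_add, Prod.fst_sub,
      Prod.snd_sub, smul_eq_mul]
    try ring
  · funext i
    simp [fstd_apply, sdbr, rhbr, hbr, adU, tailR, Fin.tail, Prod.fst_add, Prod.snd_add,
      Prod.fst_sub, Prod.snd_sub, smul_eq_mul]
    try ring
  · funext i
    simp [fstd_apply, sdbr, rhbr, hbr, adU, tailR, Fin.tail, Prod.fst_add, Prod.snd_add,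
      Prod.fst_sub, Prod.snd_sub, smul_eq_mul]
    try ring
  · simp [fstd_apply, sdbr, rhbr, hbr, adU, tailR, Fin.tail, Prod.fst_add, Prod.snd_add,
      Prod.fst_sub, Prod.snd_sub, smul_eq_mul, Fin.sum_univ_succ, Finset.sum_sub_distrib]
    try ring
  · simp [fstd_apply, sdbr, rhbr, hbr, adU, Prod.fst_add, Prod.snd_add, Prod.fst_sub,
      Prod.snd_sub, smul_eq_mul]
    try ring


-- the e_std embedding of ℝ ⊕ h_{2k+1} into the Heisenberg algebra
noncomputable def estd (k : ℕ) :
    (ℝ × ((Fin k → ℝ) × (Fin k → ℝ) × ℝ)) →ₗ[ℝ] ((Fin (k+1) → ℝ) × (Fin (k+1) → ℝ) × ℝ) :=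
  mkL (fun p => (consR 0 p.2.1, consR p.1 p.2.2.1, p.2.2.2))
    (by intro x y
        refine Prod.ext ?_ (Prod.ext ?_ rfl)
        · have := cons_add 0 0 x.2.1 y.2.1; simpa using this
        · exact cons_add x.1 y.1 x.2.2.1 y.2.2.1)
    (by intro c x
        refine Prod.ext ?_ (Prod.ext ?_ rfl)
        · have := cons_smul c 0 x.2.1; simpa using this
        · exact cons_smul c x.1 x.2.2.1)

lemma estd_apply (p : ℝ × ((Fin k → ℝ) × (Fin k → ℝ) × ℝ)) :
    estd k p = (consR 0 p.2.1, consR p.1 p.2.2.1, p.2.2.2) := rfl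

noncomputable def estd' (k : ℕ) :
    ((Fin (k+1) → ℝ) × (Fin (k+1) → ℝ) × ℝ) →ₗ[ℝ] (ℝ × ((Fin k → ℝ) × (Fin k → ℝ) × ℝ)) :=
  mkL (fun q => (q.2.1 0, (tailR q.1, tailR q.2.1, q.2.2))) (fun _ _ => rfl) (fun _ _ => rfl)

lemma estd'_apply (q : (Fin (k+1) → ℝ) × (Fin (k+1) → ℝ) × ℝ) :
    estd' k q = (q.2.1 0, (tailR q.1, tailR q.2.1, q.2.2)) := rfl

lemma estd'_estd (p : ℝ × ((Fin k → ℝ) × (Fin k → ℝ) × ℝ)) : estd' k (estd k p) = p := by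
  rw [estd_apply, estd'_apply]
  refine Prod.ext ?_ (Prod.ext ?_ (Prod.ext ?_ rfl)) <;> simp

lemma estd_estd' (q : (Fin (k+1) → ℝ) × (Fin (k+1) → ℝ) × ℝ) (h : q.1 0 = 0) :
    estd k (estd' k q) = q := by
  rw [estd'_apply, estd_apply]
  refine Prod.ext ?_ (Prod.ext ?_ rfl)
  · show consR 0 (tailR q.1) = q.1
    rw [← h]
    exact consR_self_tail q.1
  · exact consR_self_tail q.2.1

lemma hbr_estd (v w : ℝ × ((Fin k → ℝ) × (Fin k → ℝ) × ℝ)) :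
    hbr (k+1) (estd k v) (estd k w) = estd k (rhbr (k+1) v w) := by
  rw [estd_apply, estd_apply]
  refine Prod.ext ?_ (Prod.ext ?_ ?_)
  · show (0 : Fin (k+1) → ℝ) = consR 0 _
    rw [show (rhbr (k+1) v w).2.1 = 0 from rfl, cons_zero_zero]
  · show (0 : Fin (k+1) → ℝ) = consR _ _
    rw [show (rhbr (k+1) v w).1 = 0 from rfl,
      show (rhbr (k+1) v w).2.2.1 = 0 from rfl, cons_zero_zero]
  · show -(∑ i : Fin (k+1), _) = (rhbr (k+1) v w).2.2.2
    simp [rhbr, hbr, Fin.sum_univ_succ]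

end S16

/-- if `τ : h_{2m+1} → t = span{U}` is a nonzero Lie algebra homomorphism,
then `ker τ` is a codimension-one ideal of `h_{2m+1}` containing `Z`,
`ker τ ≅ ℝ ⊕ h_{2m-1}`, and the modification `h(τ)` is isomorphic to the semidirect
product `(ℝ ⊕ h_{2m-1}) ⋊ ℝ` with diagonal `ℝ`-action. -/
theorem stmt16 (m : ℕ) (hm : 1 ≤ m)
    (τ : ((Fin m → ℝ) × (Fin m → ℝ) × ℝ) →ₗ[ℝ] ℝ)
    (hτhom : ∀ v w, τ (hbr m v w) = 0) (hτ : τ ≠ 0) :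
    τ (0, 0, 1) = 0 ∧
    Module.finrank ℝ (LinearMap.ker τ) = 2 * m ∧
    (∀ v, ∀ w ∈ LinearMap.ker τ, hbr m v w ∈ LinearMap.ker τ) ∧
    (∃ e : (ℝ × ((Fin (m - 1) → ℝ) × (Fin (m - 1) → ℝ) × ℝ)) ≃ₗ[ℝ] LinearMap.ker τ,
      ∀ v w, (e (rhbr m v w) : (Fin m → ℝ) × (Fin m → ℝ) × ℝ)
        = hbr m (e v : (Fin m → ℝ) × (Fin m → ℝ) × ℝ)
            (e w : (Fin m → ℝ) × (Fin m → ℝ) × ℝ)) ∧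
    (∃ f : ((Fin m → ℝ) × (Fin m → ℝ) × ℝ) ≃ₗ[ℝ]
        ((ℝ × ((Fin (m - 1) → ℝ) × (Fin (m - 1) → ℝ) × ℝ)) × ℝ),
      ∀ v w, f (hbrτ m τ v w) = sdbr m (f v) (f w)) := by
  obtain ⟨k, rfl⟩ : ∃ k, m = k + 1 := ⟨m - 1, by omega⟩
  clear hm
  -- τ kills Z
  have hτZ : τ (0, 0, 1) = 0 := by
    have h := hτhom ((Pi.single 0 1 : Fin (k+1) → ℝ), 0, 0)
      (0, (Pi.single 0 1 : Fin (k+1) → ℝ), 0)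
    have he : hbr (k+1) ((Pi.single 0 1 : Fin (k+1) → ℝ), 0, 0)
        (0, (Pi.single 0 1 : Fin (k+1) → ℝ), 0)
        = ((0 : Fin (k+1) → ℝ), (0 : Fin (k+1) → ℝ), (-1 : ℝ)) := by
      refine Prod.ext rfl (Prod.ext rfl ?_)
      show -(∑ i : Fin (k+1), _) = (-1 : ℝ)
      simp [Pi.single_apply]
    rw [he] at h
    have h2 : ((0 : Fin (k+1) → ℝ), (0 : Fin (k+1) → ℝ), (1:ℝ))
        = -((0 : Fin (k+1) → ℝ), (0 : Fin (k+1) → ℝ), (-1:ℝ)) := by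
      refine Prod.ext (by simp) (Prod.ext (by simp) (by norm_num))
    rw [h2, map_neg, h, neg_zero]
  have hτc : ∀ c : ℝ, τ ((0 : Fin (k+1) → ℝ), (0 : Fin (k+1) → ℝ), c) = 0 := by
    intro c
    have h2 : ((0 : Fin (k+1) → ℝ), (0 : Fin (k+1) → ℝ), c)
        = c • ((0 : Fin (k+1) → ℝ), (0 : Fin (k+1) → ℝ), (1:ℝ)) := by
      refine Prod.ext (by simp) (Prod.ext (by simp) (by simp))
    rw [h2, map_smul, hτZ, smul_zero]
  -- the functional on the symplectic part
  set em : ((Fin (k+1) → ℝ) × (Fin (k+1) → ℝ)) →ₗ[ℝ] ((Fin (k+1) → ℝ) × (Fin (k+1) → ℝ) × ℝ) :=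
    S16.mkL (fun p => (p.1, p.2, 0))
      (by intro x y; refine Prod.ext rfl (Prod.ext rfl (by simp)))
      (by intro c x; refine Prod.ext rfl (Prod.ext rfl (by simp))) with hem
  set φ := τ.comp em with hφdef
  have hφap : ∀ x y, φ (x, y) = τ (x, y, 0) := fun x y => rfl
  have hτrep : ∀ v : (Fin (k+1) → ℝ) × (Fin (k+1) → ℝ) × ℝ, τ v = φ (v.1, v.2.1) := by
    intro v
    have hv : v = (v.1, v.2.1, 0)
        + (((0 : Fin (k+1) → ℝ), (0 : Fin (k+1) → ℝ), v.2.2)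
          : (Fin (k+1) → ℝ) × (Fin (k+1) → ℝ) × ℝ) := by
      refine Prod.ext (by simp) (Prod.ext (by simp) (by simp))
    rw [hφap]
    conv_lhs => rw [hv]
    rw [map_add, hτc v.2.2, add_zero]
  have hφ0 : φ ≠ 0 := by
    intro h0
    apply hτ
    refine LinearMap.ext fun v => ?_
    have := hτrep v
    rw [h0, LinearMap.zero_apply] at this
    simpa using this
  obtain ⟨S, hS, hSv⟩ := S16.normalize φ hφ0
  have hτΦ : ∀ v, τ (S16.Phi S v) = v.1 0 := by
    intro v
    rw [hτrep, S16.Phi_apply]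
    exact hSv (v.1, v.2.1)
  refine ⟨hτZ, ?_, fun v w _ => LinearMap.mem_ker.mpr (hτhom v w), ?_, ?_⟩
  · -- finrank
    have hex : ∃ v, τ v ≠ 0 := by
      by_contra hc
      push_neg at hc
      exact hτ (LinearMap.ext fun v => by simpa using hc v)
    obtain ⟨v0, hv0⟩ := hex
    have hsurj : Function.Surjective τ := by
      intro r
      refine ⟨(r / τ v0) • v0, ?_⟩
      rw [map_smul, smul_eq_mul]
      field_simp
    have h1 := LinearMap.finrank_range_add_finrank_ker τ
    rw [LinearMap.range_eq_top.mpr hsurj, finrank_top] at h1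
    have h2 : Module.finrank ℝ ((Fin (k+1) → ℝ) × (Fin (k+1) → ℝ) × ℝ)
        = (k+1) + ((k+1) + 1) := by
      simp [Module.finrank_prod, Module.finrank_pi]
    rw [h2] at h1
    have h3 : Module.finrank ℝ ℝ = 1 := Module.finrank_self ℝ
    omega
  · -- the isomorphism e
    have hmem : ∀ p : ℝ × ((Fin k → ℝ) × (Fin k → ℝ) × ℝ),
        (S16.Phi S) (S16.estd k p) ∈ LinearMap.ker τ := by
      intro p
      rw [LinearMap.mem_ker, hτΦ, S16.estd_apply]
      exact S16.consR_zero 0 p.2.1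
    have key : ∀ u : LinearMap.ker τ,
        ((S16.Phi S).symm (u : (Fin (k+1) → ℝ) × (Fin (k+1) → ℝ) × ℝ)).1 0 = 0 := by
      intro u
      have h := hτΦ ((S16.Phi S).symm u)
      rw [LinearEquiv.apply_symm_apply] at h
      rw [← h]
      exact LinearMap.mem_ker.mp u.2
    refine ⟨LinearEquiv.ofLinear
      ((((S16.Phi S).toLinearMap.comp (S16.estd k))).codRestrict (LinearMap.ker τ)
        (fun p => hmem p))
      ((S16.estd' k).comp ((S16.Phi S).symm.toLinearMap.comp (LinearMap.ker τ).subtype))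
      ?_ ?_, ?_⟩
    · refine LinearMap.ext fun u => ?_
      apply Subtype.ext
      show (S16.Phi S) (S16.estd k (S16.estd' k ((S16.Phi S).symm u)))
        = (u : (Fin (k+1) → ℝ) × (Fin (k+1) → ℝ) × ℝ)
      rw [S16.estd_estd' _ (key u), LinearEquiv.apply_symm_apply]
    · refine LinearMap.ext fun p => ?_
      show S16.estd' k ((S16.Phi S).symm ((S16.Phi S) (S16.estd k p))) = p
      rw [LinearEquiv.symm_apply_apply, S16.estd'_estd]
    · intro v w
      show (S16.Phi S) (S16.estd k (rhbr (k+1) v w))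
        = hbr (k+1) ((S16.Phi S) (S16.estd k v)) ((S16.Phi S) (S16.estd k w))
      rw [S16.hbr_Phi hS, S16.hbr_estd]
  · -- the isomorphism f
    have h1 : ∀ v, τ v = ((S16.Phi S).symm v).1 0 := by
      intro v
      rw [← hτΦ ((S16.Phi S).symm v), LinearEquiv.apply_symm_apply]
    have hstd : ∀ v w, hbrτ (k+1) τ v w
        = (S16.Phi S) (hbr (k+1) ((S16.Phi S).symm v) ((S16.Phi S).symm w)
            + ((S16.Phi S).symm v).1 0 • adU (k+1) ((S16.Phi S).symm w)
            - ((S16.Phi S).symm w).1 0 • adU (k+1) ((S16.Phi S).symm v)) := by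
      intro v w
      rw [map_sub, map_add, map_smul, map_smul, ← S16.hbr_Phi hS, ← S16.adU_Phi,
        ← S16.adU_Phi, LinearEquiv.apply_symm_apply, LinearEquiv.apply_symm_apply]
      show hbr (k+1) v w + τ v • adU (k+1) w - τ w • adU (k+1) v = _
      rw [h1 v, h1 w]
    refine ⟨(S16.Phi S).symm.trans (S16.fstd k), ?_⟩
    intro v w
    rw [LinearEquiv.trans_apply, LinearEquiv.trans_apply, LinearEquiv.trans_apply,
      hstd v w, LinearEquiv.symm_apply_apply]
    exact S16.fstd_brτ _ _
end
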